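/- arXiv:2406.06342 — 6 statements merged into one kernel-verified Lean document; each statement's English description precedes it below -/
import Mathlib

section
/- Let H and K be real Hilbert spaces, let A : H → K be a bounded linear operator satisfying A A* = α Id_K for some α > 0, and let f : K → ℝ ∪ {∞} be proper, closed and convex. Then f ∘ A is proper, closed and convex on H, and for every x ∈ H one has prox_{f∘A}(x) = x + (1/α) A*( prox_{αf}(A x) − A x ). -/
noncomputable section

/-- Convexity for extended-real-valued functions. -/
def ConvexFnE {H : Type*} [AddCommGroup H] [Module ℝ H] (f : H → EReal) : Prop :=
  ∀ x y : H, ∀ a b : ℝ, 0 ≤ a → 0 ≤ b → a + b = 1 →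
    f (a • x + b • y) ≤ (a : EReal) * f x + (b : EReal) * f y

/-- `p` is the unique minimiser of `y ↦ f y + (1/(2τ))‖y − z‖²`, i.e. `p = prox_{τ f}(z)`. -/
def IsProxPt {H : Type*} [NormedAddCommGroup H] (f : H → EReal) (τ : ℝ) (z p : H) : Prop :=
  (∀ y : H, f p + ((1 / (2 * τ) * ‖p - z‖ ^ 2 : ℝ) : EReal)
      ≤ f y + ((1 / (2 * τ) * ‖y - z‖ ^ 2 : ℝ) : EReal)) ∧
  ∀ q : H, (∀ y : H, f q + ((1 / (2 * τ) * ‖q - z‖ ^ 2 : ℝ) : EReal)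
      ≤ f y + ((1 / (2 * τ) * ‖y - z‖ ^ 2 : ℝ) : EReal)) → q = p

open ContinuousLinearMap

/-- If `A : H → K` is a bounded linear operator between real Hilbert spaces with `A A* = α Id`
for some `α > 0`, and `f : K → ℝ ∪ {∞}` is proper, closed and convex, then `f ∘ A` is proper,
closed and convex, and `prox_{f∘A}(x) = x + (1/α) A*(prox_{αf}(Ax) − Ax)` for every `x`. -/
theorem prox_comp_with_orthogonal_rows
    {H K : Type*} [NormedAddCommGroup H] [InnerProductSpace ℝ H] [CompleteSpace H]
    [NormedAddCommGroup K] [InnerProductSpace ℝ K] [CompleteSpace K]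
    (A : H →L[ℝ] K) (α : ℝ) (hα : 0 < α)
    (hAA : A ∘L ContinuousLinearMap.adjoint A = α • ContinuousLinearMap.id ℝ K)
    (f : K → EReal) (hbot : ∀ y, f y ≠ ⊥) (hproper : ∃ y, f y ≠ ⊤)
    (hclosed : LowerSemicontinuous f) (hconv : ConvexFnE f) :
    ((∀ x : H, f (A x) ≠ ⊥) ∧ (∃ x : H, f (A x) ≠ ⊤) ∧
      LowerSemicontinuous (fun x : H => f (A x)) ∧ ConvexFnE (fun x : H => f (A x))) ∧
    ∀ (x : H) (q : K), IsProxPt f α (A x) q →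
      IsProxPt (fun u : H => f (A u)) 1 x
        (x + α⁻¹ • ContinuousLinearMap.adjoint A (q - A x)) := by
  have hAB : ∀ w : K, A ((adjoint A) w) = α • w := by
    intro w
    have h := congrArg (fun T : K →L[ℝ] K => T w) hAA
    simpa using h
  have hadj_inner : ∀ (w : K) (v : H), (inner ℝ ((adjoint A) w) (v) : ℝ) = (inner ℝ (w) (A v) : ℝ) :=
    fun w v => ContinuousLinearMap.adjoint_inner_left A v w
  have hnormadj : ∀ w : K, ‖(adjoint A) w‖ ^ 2 = α * ‖w‖ ^ 2 := by
    intro w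
    have h : (inner ℝ ((adjoint A) w) ((adjoint A) w) : ℝ) = α * (inner ℝ (w) (w) : ℝ) := by
      rw [hadj_inner, hAB, real_inner_smul_right]
    rw [real_inner_self_eq_norm_sq, real_inner_self_eq_norm_sq] at h
    simpa [sq] using h
  have pyth : ∀ v : H,
      ‖v‖ ^ 2 = α⁻¹ * ‖A v‖ ^ 2 + ‖v - α⁻¹ • (adjoint A) (A v)‖ ^ 2 := by
    intro v
    have h1 : (inner ℝ (v) (α⁻¹ • (adjoint A) (A v)) : ℝ) = α⁻¹ * ‖A v‖ ^ 2 := by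
      rw [real_inner_smul_right, real_inner_comm, hadj_inner,
        real_inner_self_eq_norm_sq]
    have h2 : ‖α⁻¹ • (adjoint A) (A v)‖ ^ 2 = α⁻¹ * ‖A v‖ ^ 2 := by
      rw [norm_smul, mul_pow, hnormadj]
      rw [Real.norm_eq_abs, abs_of_pos (inv_pos.mpr hα)]
      field_simp
    rw [@norm_sub_sq_real, h1, h2]
    ring
  have pyth' : ∀ v : H,
      α * ‖v‖ ^ 2 = ‖A v‖ ^ 2 + α * ‖v - α⁻¹ • (adjoint A) (A v)‖ ^ 2 := by
    intro v
    have hc : α * (α⁻¹ * ‖A v‖ ^ 2) = ‖A v‖ ^ 2 := by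
      field_simp
    calc α * ‖v‖ ^ 2
        = α * (α⁻¹ * ‖A v‖ ^ 2 + ‖v - α⁻¹ • (adjoint A) (A v)‖ ^ 2) := by rw [← pyth v]
      _ = α * (α⁻¹ * ‖A v‖ ^ 2) + α * ‖v - α⁻¹ • (adjoint A) (A v)‖ ^ 2 := by ring
      _ = ‖A v‖ ^ 2 + α * ‖v - α⁻¹ • (adjoint A) (A v)‖ ^ 2 := by rw [hc]
  have key : ∀ v : H, ‖A v‖ ^ 2 ≤ α * ‖v‖ ^ 2 := by
    intro v
    nlinarith [pyth' v, sq_nonneg ‖v - α⁻¹ • (adjoint A) (A v)‖, hα]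
  refine ⟨⟨fun x => hbot (A x), ?_, ?_, ?_⟩, ?_⟩
  · obtain ⟨y₀, hy₀⟩ := hproper
    refine ⟨α⁻¹ • (adjoint A) y₀, ?_⟩
    have : A (α⁻¹ • (adjoint A) y₀) = y₀ := by
      rw [map_smul, hAB, smul_smul, inv_mul_cancel₀ hα.ne', one_smul]
    rw [this]; exact hy₀
  · intro x y hy
    exact A.continuous.continuousAt.eventually (hclosed (A x) y hy)
  · intro x y a b ha hb hab
    simpa [map_add, map_smul] using hconv (A x) (A y) a b ha hb hab
  · intro x q hq
    set p : H := x + α⁻¹ • (adjoint A) (q - A x) with hp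
    have hAp : A p = q := by
      rw [hp, map_add, map_smul, hAB, smul_smul, inv_mul_cancel₀ hα.ne', one_smul]
      abel
    have hpx : p - x = α⁻¹ • (adjoint A) (q - A x) := by rw [hp]; abel
    have hnorm_px : ‖p - x‖ ^ 2 = α⁻¹ * ‖q - A x‖ ^ 2 := by
      rw [hpx, norm_smul, mul_pow, hnormadj, Real.norm_eq_abs,
        abs_of_pos (inv_pos.mpr hα)]
      field_simp
    have hcoef : (1 / (2 * (1:ℝ)) * ‖p - x‖ ^ 2 : ℝ)
        = (1 / (2 * α) * ‖q - A x‖ ^ 2 : ℝ) := by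
      rw [hnorm_px]; field_simp
    have hAsub : ∀ y : H, A y - A x = A (y - x) := fun y => (map_sub A y x).symm
    have hreal : ∀ y : H, (1 / (2 * α) * ‖A y - A x‖ ^ 2 : ℝ)
        ≤ 1 / (2 * 1) * ‖y - x‖ ^ 2 := by
      intro y
      rw [hAsub y]
      have hk := key (y - x)
      have h2α : (0:ℝ) < 2 * α := by linarith
      rw [div_mul_eq_mul_div, div_mul_eq_mul_div, div_le_div_iff₀ h2α (by norm_num)]
      nlinarith [hk]
    have hmin : ∀ y : H, f (A p) + ((1 / (2 * (1:ℝ)) * ‖p - x‖ ^ 2 : ℝ) : EReal)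
        ≤ f (A y) + ((1 / (2 * (1:ℝ)) * ‖y - x‖ ^ 2 : ℝ) : EReal) := by
      intro y
      rw [hAp, hcoef]
      calc f q + ((1 / (2 * α) * ‖q - A x‖ ^ 2 : ℝ) : EReal)
          ≤ f (A y) + ((1 / (2 * α) * ‖A y - A x‖ ^ 2 : ℝ) : EReal) := hq.1 (A y)
        _ ≤ f (A y) + ((1 / (2 * (1:ℝ)) * ‖y - x‖ ^ 2 : ℝ) : EReal) := by
            apply add_le_add_right
            exact_mod_cast hreal y
    constructor
    · exact hmin
    · intro u hu
      -- f q is finite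
      obtain ⟨y₀, hy₀⟩ := hproper
      have hfq_netop : f q ≠ ⊤ := by
        have h1 := hq.1 y₀
        have hr : f y₀ = ((f y₀).toReal : EReal) := (EReal.coe_toReal hy₀ (hbot y₀)).symm
        intro htop
        rw [htop, hr, ← EReal.coe_add, EReal.top_add_coe] at h1
        exact (EReal.coe_ne_top _) (top_le_iff.mp h1)
      have hfq : f q = ((f q).toReal : EReal) := (EReal.coe_toReal hfq_netop (hbot q)).symm
      -- specialize the minimality of u at p
      have hup : f (A u) + ((1 / (2 * (1:ℝ)) * ‖u - x‖ ^ 2 : ℝ) : EReal)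
          ≤ f (A p) + ((1 / (2 * (1:ℝ)) * ‖p - x‖ ^ 2 : ℝ) : EReal) := hu p
      rw [hAp, hcoef] at hup
      -- f (A u) is finite
      have hfAu_netop : f (A u) ≠ ⊤ := by
        intro htop
        rw [htop, EReal.top_add_coe, hfq, ← EReal.coe_add] at hup
        exact (EReal.coe_ne_top _) (top_le_iff.mp hup)
      have hfAu : f (A u) = ((f (A u)).toReal : EReal) :=
        (EReal.coe_toReal hfAu_netop (hbot (A u))).symm
      -- A u is a prox point of f at A x, hence A u = q
      have hAuq : A u = q := by
        apply hq.2
        intro y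
        calc f (A u) + ((1 / (2 * α) * ‖A u - A x‖ ^ 2 : ℝ) : EReal)
            ≤ f (A u) + ((1 / (2 * (1:ℝ)) * ‖u - x‖ ^ 2 : ℝ) : EReal) := by
              apply add_le_add_right
              exact_mod_cast hreal u
          _ ≤ f q + ((1 / (2 * α) * ‖q - A x‖ ^ 2 : ℝ) : EReal) := hup
          _ ≤ f y + ((1 / (2 * α) * ‖y - A x‖ ^ 2 : ℝ) : EReal) := hq.1 y
      -- extract real inequality
      have hfAu_eq : f (A u) = f q := by rw [hAuq]
      have hineq : (1 / (2 * (1:ℝ)) * ‖u - x‖ ^ 2 : ℝ)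
          ≤ 1 / (2 * α) * ‖q - A x‖ ^ 2 := by
        rw [hfAu_eq, hfq, ← EReal.coe_add, ← EReal.coe_add, EReal.coe_le_coe_iff] at hup
        linarith
      -- residual is zero
      have hqAx : q - A x = A (u - x) := by rw [← hAuq, map_sub]
      have hres : ‖u - x - α⁻¹ • (adjoint A) (A (u - x))‖ ^ 2 ≤ 0 := by
        have hp2 := pyth' (u - x)
        rw [hqAx] at hineq
        have h2α : (0:ℝ) < 2 * α := by linarith
        rw [div_mul_eq_mul_div, div_mul_eq_mul_div, div_le_div_iff₀ (by norm_num) h2α]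
          at hineq
        have h3 : α * ‖u - x - α⁻¹ • (adjoint A) (A (u - x))‖ ^ 2 ≤ α * 0 := by
          rw [mul_zero]; linarith
        exact le_of_mul_le_mul_left h3 hα
      have hres0 : u - x - α⁻¹ • (adjoint A) (A (u - x)) = 0 := by
        have h0 := sq_nonneg ‖u - x - α⁻¹ • (adjoint A) (A (u - x))‖
        have hn : ‖u - x - α⁻¹ • (adjoint A) (A (u - x))‖ ^ 2 = 0 := le_antisymm hres h0
        exact norm_eq_zero.mp (by simpa using pow_eq_zero_iff (n := 2) (by norm_num) |>.mp hn)
      have hres0' : u - (x + α⁻¹ • (adjoint A) (A (u - x))) = 0 := by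
        rw [sub_add_eq_sub_sub]; exact hres0
      have hu_eq : u = x + α⁻¹ • (adjoint A) (A (u - x)) := sub_eq_zero.mp hres0'
      rw [hp, hqAx]; exact hu_eq
end
end

section
/- Let H be a real Hilbert space, g : H → ℝ ∪ {∞} proper, closed and convex with a minimiser x* ∈ H, and let τ > 0. Define the proximal point iterates x_{k+1} = prox_{τg}(x_k) from any x_0 ∈ H. Then for every k ≥ 1, g(x_k) − g(x*) ≤ ‖x_0 − x*‖² / (2τk); i.e. the proximal point algorithm with constant step size converges at rate O(1/k) in objective value. -/
noncomputable section

/-- Three-point inequality for a prox point. -/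
lemma three_point {H : Type*} [NormedAddCommGroup H] [InnerProductSpace ℝ H]
    (g : H → EReal) (hbot : ∀ x, g x ≠ ⊥) (hconv : ConvexFnE g)
    (τ : ℝ) (hτ : 0 < τ) (z p : H)
    (hp : ∀ y : H, g p + ((1 / (2 * τ) * ‖p - z‖ ^ 2 : ℝ) : EReal)
      ≤ g y + ((1 / (2 * τ) * ‖y - z‖ ^ 2 : ℝ) : EReal))
    (hptop : g p ≠ ⊤) (y : H) (hytop : g y ≠ ⊤) :
    ((g p).toReal) + (1 / (2 * τ)) * (‖p - z‖ ^ 2 + ‖y - p‖ ^ 2)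
      ≤ ((g y).toReal) + (1 / (2 * τ)) * ‖y - z‖ ^ 2 := by
  set c : ℝ := 1 / (2 * τ) with hc
  have hc0 : 0 < c := by positivity
  set Gp := (g p).toReal with hGp
  set Gy := (g y).toReal with hGy
  have hgp : g p = (Gp : EReal) := (EReal.coe_toReal hptop (hbot p)).symm
  have hgy : g y = (Gy : EReal) := (EReal.coe_toReal hytop (hbot y)).symm
  set A : ℝ := ‖p - z‖ ^ 2 with hA
  set d : ℝ := ‖y - p‖ ^ 2 with hd
  set B : ℝ := ‖y - z‖ ^ 2 with hB
  have hd0 : 0 ≤ d := by positivity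
  set i : ℝ := inner ℝ (p - z) (y - p) with hi
  have hBid : B = A + 2 * i + d := by
    have h1 : y - z = (p - z) + (y - p) := by abel
    rw [hB, h1, @norm_add_sq_real]
  -- key: for all t ∈ (0,1), Gp ≤ Gy + 2*c*i + c*t*d
  have key : ∀ t : ℝ, 0 < t → t < 1 → Gp ≤ Gy + 2 * c * i + c * t * d := by
    intro t ht0 ht1
    set w : H := (1 - t) • p + t • y with hw
    have hwn : ‖w - z‖ ^ 2 = A + 2 * t * i + t ^ 2 * d := by
      have h1 : w - z = (p - z) + t • (y - p) := by
        rw [hw]; module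
      rw [h1, @norm_add_sq_real, real_inner_smul_right, norm_smul, hA, hi, hd]
      rw [Real.norm_eq_abs, abs_of_pos ht0]
      ring
    have hcv := hconv p y (1 - t) t (by linarith) (le_of_lt ht0) (by ring)
    have hcvr : g w ≤ (((1 - t) * Gp + t * Gy : ℝ) : EReal) := by
      rw [hw]
      calc g ((1 - t) • p + t • y) ≤ ((1 - t : ℝ) : EReal) * g p + (t : EReal) * g y := hcv
        _ = (((1 - t) * Gp + t * Gy : ℝ) : EReal) := by
            rw [hgp, hgy, ← EReal.coe_mul, ← EReal.coe_mul, ← EReal.coe_add]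
    have hwtop : g w ≠ ⊤ := by
      intro h
      rw [h, top_le_iff] at hcvr
      exact EReal.coe_ne_top _ hcvr
    set Gw := (g w).toReal with hGw
    have hgw : g w = (Gw : EReal) := (EReal.coe_toReal hwtop (hbot w)).symm
    have h1 : Gp + c * A ≤ Gw + c * ‖w - z‖ ^ 2 := by
      have := hp w
      rw [hgp, hgw] at this
      rw [← EReal.coe_add, ← EReal.coe_add] at this
      exact_mod_cast this
    have h2 : Gw ≤ (1 - t) * Gp + t * Gy := by
      rw [hgw] at hcvr; exact_mod_cast hcvr
    rw [hwn] at h1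
    have ht : t * Gp ≤ t * Gy + 2 * c * t * i + c * t ^ 2 * d := by nlinarith
    have := (mul_le_mul_iff_right₀ ht0).mp (by nlinarith : t * Gp ≤ t * (Gy + 2 * c * i + c * t * d))
    linarith
  -- pass to the limit t → 0
  have lim : Gp ≤ Gy + 2 * c * i := by
    by_contra h
    push_neg at h
    set K : ℝ := Gp - (Gy + 2 * c * i) with hK
    have hK0 : 0 < K := by simp only [hK]; linarith
    have hcd : 0 < c * d := by
      by_contra h'
      push_neg at h'
      have := key (1/2) (by norm_num) (by norm_num)
      nlinarith
    have hd1 : 0 < d := by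
      rcases hd0.lt_or_eq with h' | h'
      · exact h'
      · rw [← h', mul_zero] at hcd; exact absurd hcd (lt_irrefl 0)
    set t : ℝ := min (1/2 : ℝ) (K / (2 * (c * d))) with ht
    have ht0 : 0 < t := lt_min (by norm_num) (div_pos hK0 (by linarith))
    have ht1 : t < 1 := lt_of_le_of_lt (min_le_left _ _) (by norm_num)
    have hkey := key t ht0 ht1
    have h2 : t ≤ K / (2 * (c * d)) := min_le_right _ _
    have heq : c * (K / (2 * (c * d))) * d = K / 2 := by
      field_simp
    have h3 : c * t * d ≤ K / 2 := by
      nlinarith [mul_le_mul_of_nonneg_right (mul_le_mul_of_nonneg_left h2 hc0.le) hd0]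
    simp only [hK] at hkey hK0 h3
    linarith
  rw [hBid]; nlinarith

/-- `O(1/k)` convergence of the proximal point algorithm: for a proper, closed, convex
`g : H → ℝ ∪ {∞}` with minimiser `x*`, constant step `τ > 0`, and iterates
`x_{k+1} = prox_{τg}(x_k)`, one has `g(x_k) − g(x*) ≤ ‖x_0 − x*‖²/(2τk)` for all `k ≥ 1`. -/
theorem proximal_point_rate
    {H : Type*} [NormedAddCommGroup H] [InnerProductSpace ℝ H] [CompleteSpace H]
    (g : H → EReal) (hbot : ∀ x, g x ≠ ⊥) (hproper : ∃ x, g x ≠ ⊤)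
    (hclosed : LowerSemicontinuous g) (hconv : ConvexFnE g)
    (xs : H) (hmin : ∀ y : H, g xs ≤ g y)
    (τ : ℝ) (hτ : 0 < τ)
    (x : ℕ → H) (hrec : ∀ k : ℕ, IsProxPt g τ (x k) (x (k + 1))) :
    ∀ k : ℕ, 1 ≤ k →
      g (x k) ≤ g xs + ((‖x 0 - xs‖ ^ 2 / (2 * τ * k) : ℝ) : EReal) := by

  intro k hk
  obtain ⟨w0, hw0⟩ := hproper
  have hc0 : 0 < 1 / (2 * τ) := by positivity
  set c : ℝ := 1 / (2 * τ) with hc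
  have hst : g xs ≠ ⊤ := fun h => hw0 (top_le_iff.1 (h ▸ hmin w0))
  have htop : ∀ j : ℕ, g (x (j + 1)) ≠ ⊤ := by
    intro j h
    have h1 := (hrec j).1 w0
    rw [h] at h1
    have h2 : g w0 + ((c * ‖w0 - x j‖ ^ 2 : ℝ) : EReal) < ⊤ :=
      EReal.add_lt_top hw0 (EReal.coe_ne_top _)
    rw [EReal.top_add_coe] at h1
    exact (h2.not_ge h1).elim
  set r : ℕ → ℝ := fun j => (g (x j)).toReal with hr
  set rs : ℝ := (g xs).toReal with hrs
  have hgs : g xs = (rs : EReal) := (EReal.coe_toReal hst (hbot xs)).symm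
  have hgj : ∀ j : ℕ, g (x (j + 1)) = ((r (j + 1) : ℝ) : EReal) :=
    fun j => (EReal.coe_toReal (htop j) (hbot _)).symm
  -- step inequality
  have S1 : ∀ j : ℕ, r (j + 1) + c * ‖xs - x (j + 1)‖ ^ 2 ≤ rs + c * ‖xs - x j‖ ^ 2 := by
    intro j
    have h3 := three_point g hbot hconv τ hτ (x j) (x (j + 1)) (hrec j).1 (htop j) xs hst
    have h4 : (0:ℝ) ≤ c * ‖x (j + 1) - x j‖ ^ 2 := by positivity
    simp only [← hr, ← hrs, ← hc] at h3
    nlinarith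
  -- monotonicity
  have S2 : ∀ j : ℕ, r (j + 2) ≤ r (j + 1) := by
    intro j
    have h1 := (hrec (j + 1)).1 (x (j + 1))
    have hz : ((c * ‖x (j + 1) - x (j + 1)‖ ^ 2 : ℝ) : EReal) = 0 := by
      simp
    rw [hz, add_zero] at h1
    have h2 : g (x (j + 1 + 1)) ≤ g (x (j + 1)) :=
      le_trans (le_add_of_nonneg_right (EReal.coe_nonneg.2 (by positivity))) h1
    rw [hgj (j + 1), hgj j] at h2
    have h3 : r (j + 1 + 1) ≤ r (j + 1) := by exact_mod_cast h2
    simpa using h3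
  have mono : ∀ i j : ℕ, i ≤ j → r (j + 1) ≤ r (i + 1) := by
    intro i j hij
    induction j with
    | zero => obtain rfl := Nat.le_zero.1 hij; exact le_refl _
    | succ n ih =>
      rcases Nat.lt_or_ge i (n + 1) with h | h
      · exact le_trans (S2 n) (ih (Nat.lt_succ_iff.1 h))
      · have : i = n + 1 := le_antisymm hij h
        rw [this]
  -- telescoping
  have tele : ∀ n : ℕ, (∑ i ∈ Finset.range n, (r (i + 1) - rs))
      ≤ c * ‖xs - x 0‖ ^ 2 - c * ‖xs - x n‖ ^ 2 := by
    intro n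
    induction n with
    | zero => simp
    | succ m ih =>
      rw [Finset.sum_range_succ]
      have := S1 m
      linarith
  obtain ⟨m, rfl⟩ : ∃ m, k = m + 1 := ⟨k - 1, (Nat.succ_pred_eq_of_pos hk).symm⟩
  have hks : (0:ℝ) < (m + 1 : ℕ) := by positivity
  have hsum : ((m + 1 : ℕ) : ℝ) * (r (m + 1) - rs)
      ≤ ∑ i ∈ Finset.range (m + 1), (r (i + 1) - rs) := by
    calc ((m + 1 : ℕ) : ℝ) * (r (m + 1) - rs)
        = ∑ _i ∈ Finset.range (m + 1), (r (m + 1) - rs) := by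
          rw [Finset.sum_const, Finset.card_range, nsmul_eq_mul]
      _ ≤ ∑ i ∈ Finset.range (m + 1), (r (i + 1) - rs) := by
          refine Finset.sum_le_sum fun i hi => ?_
          have := mono i m (Nat.lt_succ_iff.1 (Finset.mem_range.1 hi))
          linarith
  have hfin : ((m + 1 : ℕ) : ℝ) * (r (m + 1) - rs) ≤ c * ‖xs - x 0‖ ^ 2 := by
    have := tele (m + 1)
    have h4 : (0:ℝ) ≤ c * ‖xs - x (m + 1)‖ ^ 2 := by positivity
    linarith
  have hrk : r (m + 1) ≤ rs + ‖x 0 - xs‖ ^ 2 / (2 * τ * (m + 1 : ℕ)) := by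
    have hS : ‖xs - x 0‖ = ‖x 0 - xs‖ := norm_sub_rev _ _
    rw [hS] at hfin
    have h5 : r (m + 1) - rs ≤ c * ‖x 0 - xs‖ ^ 2 / ((m + 1 : ℕ) : ℝ) := by
      rw [le_div_iff₀ hks]
      nlinarith
    have h6 : c * ‖x 0 - xs‖ ^ 2 / ((m + 1 : ℕ) : ℝ) = ‖x 0 - xs‖ ^ 2 / (2 * τ * (m + 1 : ℕ)) := by
      rw [hc]
      field_simp
      try ring
    linarith [h6 ▸ h5]
  rw [hgj m, hgs, ← EReal.coe_add]
  exact_mod_cast hrk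
end
end

section
/- Let H be a real Hilbert space, g : H → ℝ ∪ {∞} proper, closed and convex, h : H → ℝ convex and L-smooth for some L > 0, and suppose Φ = g + h has a minimiser x* ∈ H. With step size τ = 1/L, define the proximal gradient iterates x_{k+1} = prox_{τg}(x_k − τ∇h(x_k)) from any x_0 ∈ H. Then for every k ≥ 1, Φ(x_k) − Φ(x*) ≤ L‖x_0 − x*‖² / (2k). -/
noncomputable section

section Aux

open InnerProductSpace

local notation "⟪" a ", " b "⟫" => inner (𝕜 := ℝ) a b

variable {H : Type*} [NormedAddCommGroup H] [InnerProductSpace ℝ H] [CompleteSpace H]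

lemma pgr_line_hasDerivAt (h : H → ℝ) (hdiff : Differentiable ℝ h) (x v : H) (t : ℝ) :
    HasDerivAt (fun s : ℝ => h (x + s • v)) ⟪gradient h (x + t • v), v⟫ t := by
  have hc : HasDerivAt (fun s : ℝ => x + s • v) v t := by
    simpa using ((hasDerivAt_id t).smul_const v).const_add x
  have := ((hdiff (x + t • v)).hasGradientAt.hasFDerivAt).comp_hasDerivAt t hc
  exact this

omit [CompleteSpace H] in
lemma pgr_line_convexOn (h : H → ℝ) (hconv : ConvexOn ℝ Set.univ h) (x v : H) :
    ConvexOn ℝ Set.univ (fun s : ℝ => h (x + s • v)) := by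
  have := hconv.comp_affineMap (AffineMap.lineMap x (x + v))
  have he : (fun s : ℝ => h (x + s • v)) = h ∘ (AffineMap.lineMap x (x + v)) := by
    funext s
    simp [AffineMap.lineMap_apply, add_comm]
  rw [he]
  simpa using this

/-- First-order convexity inequality. -/
lemma pgr_grad_convex_le (h : H → ℝ) (hconv : ConvexOn ℝ Set.univ h)
    (hdiff : Differentiable ℝ h) (x y : H) :
    h x + ⟪gradient h x, y - x⟫ ≤ h y := by
  set v := y - x with hv
  have hφ := pgr_line_convexOn h hconv x v
  have hd := pgr_line_hasDerivAt h hdiff x v 0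
  have hslope := hφ.le_slope_of_hasDerivAt (Set.mem_univ (0:ℝ)) (Set.mem_univ (1:ℝ))
    one_pos (by simpa using hd)
  have h1 : x + (1:ℝ) • v = y := by simp [hv]
  have h0 : x + (0:ℝ) • v = x := by simp
  simp only [slope_def_field, h0, h1, sub_zero, div_one] at hslope
  have hgx : ⟪gradient h x, v⟫ = fderiv ℝ h x v := by simp
  linarith

/-- Descent lemma. -/
lemma pgr_descent_lemma (h : H → ℝ) (L : ℝ) (hL : 0 < L)
    (hdiff : Differentiable ℝ h)
    (hlip : ∀ x y : H, ‖gradient h x - gradient h y‖ ≤ L * ‖x - y‖) (x y : H) :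
    h y ≤ h x + ⟪gradient h x, y - x⟫ + L / 2 * ‖y - x‖ ^ 2 := by
  set v := y - x with hv
  set ψ : ℝ → ℝ := fun s => L / 2 * (‖x‖ ^ 2 + 2 * s * ⟪x, v⟫ + s ^ 2 * ‖v‖ ^ 2) - h (x + s • v)
    with hψ
  have hd : ∀ s : ℝ, HasDerivAt ψ
      (L * (⟪x, v⟫ + s * ‖v‖ ^ 2) - ⟪gradient h (x + s • v), v⟫) s := by
    intro s
    have h1 : HasDerivAt (fun s : ℝ => L / 2 * (‖x‖ ^ 2 + 2 * s * ⟪x, v⟫ + s ^ 2 * ‖v‖ ^ 2))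
        (L * (⟪x, v⟫ + s * ‖v‖ ^ 2)) s := by
      have : HasDerivAt (fun s : ℝ => ‖x‖ ^ 2 + 2 * s * ⟪x, v⟫ + s ^ 2 * ‖v‖ ^ 2)
          (2 * ⟪x, v⟫ + 2 * s * ‖v‖ ^ 2) s := by
        have ha : HasDerivAt (fun s : ℝ => 2 * s * ⟪x, v⟫) (2 * ⟪x, v⟫) s := by
          simpa [mul_comm, mul_assoc] using
            ((hasDerivAt_id s).const_mul (2 : ℝ)).mul_const ⟪x, v⟫
        have hb : HasDerivAt (fun s : ℝ => s ^ 2 * ‖v‖ ^ 2) (2 * s * ‖v‖ ^ 2) s := by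
          simpa using (hasDerivAt_pow 2 s).mul_const (‖v‖ ^ 2)
        exact (ha.const_add (‖x‖ ^ 2)).add hb
      have := this.const_mul (L / 2)
      exact this.congr_deriv (by ring)
    exact h1.sub (pgr_line_hasDerivAt h hdiff x v s)
  have hmono : Monotone (deriv ψ) := by
    intro s t hst
    rw [(hd s).deriv, (hd t).deriv]
    have key : ⟪gradient h (x + t • v) - gradient h (x + s • v), v⟫ ≤ L * (t - s) * ‖v‖ ^ 2 := by
      calc ⟪gradient h (x + t • v) - gradient h (x + s • v), v⟫
          ≤ ‖gradient h (x + t • v) - gradient h (x + s • v)‖ * ‖v‖ := real_inner_le_norm _ _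
        _ ≤ L * ‖(x + t • v) - (x + s • v)‖ * ‖v‖ := by
            have := hlip (x + t • v) (x + s • v)
            nlinarith [norm_nonneg v]
        _ = L * (t - s) * ‖v‖ ^ 2 := by
            have : (x + t • v) - (x + s • v) = (t - s) • v := by
              rw [sub_smul]; abel
            rw [this, norm_smul]
            simp [abs_of_nonneg (sub_nonneg.2 hst)]
            ring
    have := inner_sub_left (𝕜 := ℝ) (gradient h (x + t • v)) (gradient h (x + s • v)) v
    nlinarith
  have hψconv : ConvexOn ℝ Set.univ ψ :=
    Monotone.convexOn_univ_of_deriv (fun s => (hd s).differentiableAt) hmono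
  have hslope := hψconv.le_slope_of_hasDerivAt (Set.mem_univ (0:ℝ)) (Set.mem_univ (1:ℝ))
    one_pos (hd 0)
  have h1 : x + (1:ℝ) • v = y := by simp [hv]
  simp only [slope_def_field, hψ, h1, sub_zero, div_one] at hslope
  simp only [zero_smul, add_zero, mul_zero, zero_mul, zero_pow, one_pow, one_mul] at hslope
  have hval : ‖y - x‖ ^ 2 = ‖v‖ ^ 2 := by rw [hv]
  nlinarith [hslope]

omit [CompleteSpace H] in
lemma pgr_prox_ne_top (g : H → EReal) (c : ℝ) (z p : H)
    (hprox : ∀ y : H, g p + ((c * ‖p - z‖ ^ 2 : ℝ) : EReal)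
      ≤ g y + ((c * ‖y - z‖ ^ 2 : ℝ) : EReal))
    (y₀ : H) (hy₀ : g y₀ ≠ ⊤) : g p ≠ ⊤ := by
  intro htop
  have h1 := hprox y₀
  rw [htop] at h1
  have h2 : (⊤ : EReal) + ((c * ‖p - z‖ ^ 2 : ℝ) : EReal) = ⊤ :=
    EReal.top_add_of_ne_bot (EReal.coe_ne_bot _)
  rw [h2] at h1
  exact absurd (lt_of_le_of_lt h1 (EReal.add_lt_top hy₀ (EReal.coe_ne_top _))) (lt_irrefl _)

omit [CompleteSpace H] in
lemma pgr_prox_three_point (g : H → EReal) (hgbot : ∀ x, g x ≠ ⊥) (hgconv : ConvexFnE g)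
    (c : ℝ) (hc : 0 < c) (z p : H)
    (hprox : ∀ y : H, g p + ((c * ‖p - z‖ ^ 2 : ℝ) : EReal)
      ≤ g y + ((c * ‖y - z‖ ^ 2 : ℝ) : EReal))
    (gp : ℝ) (hgp : g p = (gp : EReal))
    (y : H) (gy : ℝ) (hgy : g y = (gy : EReal)) :
    gp + c * ‖p - z‖ ^ 2 + c * ‖y - p‖ ^ 2 ≤ gy + c * ‖y - z‖ ^ 2 := by
  set A := ‖p - z‖ ^ 2 with hA
  set B := ⟪p - z, y - p⟫ with hB
  set C := ‖y - p‖ ^ 2 with hC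
  have hyz : ‖y - z‖ ^ 2 = A + 2 * B + C := by
    have : y - z = (p - z) + (y - p) := by abel
    rw [this, norm_add_sq_real]
  have key : ∀ t : ℝ, 0 < t → t ≤ 1 → gp ≤ gy + 2 * c * B + c * t * C := by
    intro t ht0 ht1
    set w := p + t • (y - p) with hw
    have hwz : ‖w - z‖ ^ 2 = A + 2 * t * B + t ^ 2 * C := by
      have h1 : w - z = (p - z) + t • (y - p) := by rw [hw]; abel
      rw [h1, norm_add_sq_real, real_inner_smul_right, norm_smul]
      simp [mul_pow]
      ring
    have hwc : w = (1 - t) • p + t • y := by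
      rw [hw, smul_sub, sub_smul, one_smul]; abel
    have hgw_le : g w ≤ (((1 - t) * gp + t * gy : ℝ) : EReal) := by
      have h2 := hgconv p y (1 - t) t (by linarith) ht0.le (by ring)
      rw [hgp, hgy] at h2
      rw [hwc]
      calc g ((1 - t) • p + t • y)
          ≤ ((1 - t : ℝ) : EReal) * (gp : EReal) + (t : EReal) * (gy : EReal) := h2
        _ = (((1 - t) * gp + t * gy : ℝ) : EReal) := by norm_cast
    have hwtop : g w ≠ ⊤ := fun htop => by
      rw [htop] at hgw_le; exact absurd (top_le_iff.mp hgw_le) (EReal.coe_ne_top _)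
    set gw : ℝ := (g w).toReal with hgwdef
    have hgw : g w = (gw : EReal) := (EReal.coe_toReal hwtop (hgbot w)).symm
    have hgwle : gw ≤ (1 - t) * gp + t * gy := by
      rw [hgw] at hgw_le; exact_mod_cast hgw_le
    have hp := hprox w
    rw [hgp, hgw, ← EReal.coe_add, ← EReal.coe_add, EReal.coe_le_coe_iff] at hp
    rw [hwz] at hp
    have hCnn : 0 ≤ C := by rw [hC]; positivity
    nlinarith [hp, hgwle]
  by_cases hC0 : C = 0
  · have := key 1 one_pos le_rfl
    rw [hyz]; nlinarith
  · have hCpos : 0 < C := lt_of_le_of_ne (by rw [hC]; positivity) (Ne.symm hC0)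
    by_contra hlt
    push_neg at hlt
    rw [hyz] at hlt
    set ε := gp + c * A + c * C - (gy + c * (A + 2 * B + C)) with hε
    have hεpos : 0 < ε := by linarith
    set t := min 1 (ε / (2 * c * C)) with ht
    have ht0 : 0 < t := lt_min one_pos (by positivity)
    have ht1 : t ≤ 1 := min_le_left _ _
    have h3 := key t ht0 ht1
    have h4 : c * t * C ≤ ε / 2 := by
      have h6 : t ≤ ε / (2 * c * C) := min_le_right _ _
      have h5 : c * t * C ≤ c * (ε / (2 * c * C)) * C := by nlinarith
      calc c * t * C ≤ c * (ε / (2 * c * C)) * C := h5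
        _ = ε / 2 := by field_simp
    nlinarith

end Aux

/-- `O(1/k)` convergence of proximal gradient descent with step `τ = 1/L`. -/
theorem proximal_gradient_rate
    {H : Type*} [NormedAddCommGroup H] [InnerProductSpace ℝ H] [CompleteSpace H]
    (g : H → EReal) (hgbot : ∀ x, g x ≠ ⊥) (hgproper : ∃ x, g x ≠ ⊤)
    (hgclosed : LowerSemicontinuous g) (hgconv : ConvexFnE g)
    (h : H → ℝ) (L : ℝ) (hL : 0 < L)
    (hconv : ConvexOn ℝ Set.univ h) (hdiff : Differentiable ℝ h)
    (hlip : ∀ x y : H, ‖gradient h x - gradient h y‖ ≤ L * ‖x - y‖)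
    (xs : H) (hmin : ∀ y : H, g xs + (h xs : EReal) ≤ g y + (h y : EReal))
    (x : ℕ → H)
    (hrec : ∀ k : ℕ, IsProxPt g (1 / L) (x k - (1 / L) • gradient h (x k)) (x (k + 1))) :
    ∀ k : ℕ, 1 ≤ k →
      g (x k) + (h (x k) : EReal) ≤
        g xs + (h xs : EReal) + ((L * ‖x 0 - xs‖ ^ 2 / (2 * k) : ℝ) : EReal) := by
  classical
  obtain ⟨y₀, hy₀⟩ := hgproper
  have hcoef : 1 / (2 * (1 / L)) = L / 2 := by field_simp
  set z : ℕ → H := fun k => x k - (1 / L) • gradient h (x k) with hz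
  have hprox : ∀ k : ℕ, ∀ y : H,
      g (x (k + 1)) + ((L / 2 * ‖x (k + 1) - z k‖ ^ 2 : ℝ) : EReal)
        ≤ g y + ((L / 2 * ‖y - z k‖ ^ 2 : ℝ) : EReal) := by
    intro k y
    have := (hrec k).1 y
    rw [hcoef] at this
    exact this
  have hL2 : (0 : ℝ) < L / 2 := by linarith
  -- finiteness
  have hfin : ∀ k : ℕ, g (x (k + 1)) ≠ ⊤ := fun k =>
    pgr_prox_ne_top g (L / 2) (z k) (x (k + 1)) (hprox k) y₀ hy₀
  have hxstop : g xs ≠ ⊤ := by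
    intro htop
    have h1 := hmin y₀
    rw [htop, EReal.top_add_of_ne_bot (EReal.coe_ne_bot _)] at h1
    exact absurd (lt_of_le_of_lt h1 (EReal.add_lt_top hy₀ (EReal.coe_ne_top _))) (lt_irrefl _)
  set gs : ℝ := (g xs).toReal with hgsdef
  have hgs : g xs = (gs : EReal) := (EReal.coe_toReal hxstop (hgbot xs)).symm
  set G : ℕ → ℝ := fun k => (g (x k)).toReal with hGdef
  have hG : ∀ k : ℕ, 1 ≤ k → g (x k) = ((G k : ℝ) : EReal) := by
    intro k hk
    match k, hk with
    | (j + 1), _ => exact (EReal.coe_toReal (hfin j) (hgbot _)).symm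
  -- the one-step inequality
  have hstep : ∀ k : ℕ, ∀ y : H, ∀ gy : ℝ, g y = (gy : EReal) →
      G (k + 1) + h (x (k + 1)) + L / 2 * ‖y - x (k + 1)‖ ^ 2
        ≤ gy + h y + L / 2 * ‖y - x k‖ ^ 2 := by
    intro k y gy hgy
    set p := x (k + 1) with hp
    set xk := x k with hxk
    set gr := gradient h xk with hgr
    have expand : ∀ u : H, L / 2 * ‖u - z k‖ ^ 2 =
        L / 2 * ‖u - xk‖ ^ 2 + inner (𝕜 := ℝ) gr (u - xk) + 1 / (2 * L) * ‖gr‖ ^ 2 := by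
      intro u
      have h1 : u - z k = (u - xk) + (1 / L) • gr := by
        rw [hz]; simp only; abel
      rw [h1, norm_add_sq_real, real_inner_smul_right, norm_smul, real_inner_comm]
      rw [Real.norm_eq_abs, abs_of_pos (by positivity : (0:ℝ) < 1 / L)]
      field_simp
    have t1 := pgr_prox_three_point g hgbot hgconv (L / 2) hL2 (z k) p (hprox k)
      (G (k + 1)) (hG (k + 1) (by omega)) y gy hgy
    have e1 := expand p
    have e2 := expand y
    have d := pgr_descent_lemma h L hL hdiff hlip xk p
    have cv := pgr_grad_convex_le h hconv hdiff xk y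
    rw [← hgr] at d cv
    linarith
  -- specializations
  have hstar : ∀ k : ℕ,
      G (k + 1) + h (x (k + 1)) + L / 2 * ‖x (k + 1) - xs‖ ^ 2
        ≤ gs + h xs + L / 2 * ‖x k - xs‖ ^ 2 := by
    intro k
    have := hstep k xs gs hgs
    rw [norm_sub_rev xs (x (k+1)), norm_sub_rev xs (x k)] at this
    linarith
  have hmono' : ∀ k : ℕ, 1 ≤ k → G (k + 1) + h (x (k + 1)) ≤ G k + h (x k) := by
    intro k hk
    have := hstep k (x k) (G k) (hG k hk)
    have hz0 : ‖x k - x k‖ ^ 2 = 0 := by simp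
    have hnn : 0 ≤ L / 2 * ‖x k - x (k + 1)‖ ^ 2 := by positivity
    rw [hz0] at this
    linarith
  -- induction
  have ind : ∀ K : ℕ, 1 ≤ K →
      (K : ℝ) * ((G K + h (x K)) - (gs + h xs)) + L / 2 * ‖x K - xs‖ ^ 2
        ≤ L / 2 * ‖x 0 - xs‖ ^ 2 := by
    intro K hK
    induction K with
    | zero => omega
    | succ n ih =>
      rcases Nat.eq_or_lt_of_le hK with h1 | h1
      · -- n + 1 = 1, i.e. n = 0
        have hn : n = 0 := by omega
        subst hn
        have := hstar 0
        push_cast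
        linarith
      · have hn : 1 ≤ n := by omega
        have ihn := ih hn
        have hs := hstar n
        have hm := hmono' n hn
        have hnn : (0 : ℝ) ≤ (n : ℝ) := by positivity
        push_cast
        nlinarith
  -- conclude
  intro k hk
  have hkpos : (0 : ℝ) < (k : ℝ) := by exact_mod_cast hk
  have hindk := ind k hk
  have hfinal : G k + h (x k) ≤ gs + h xs + L * ‖x 0 - xs‖ ^ 2 / (2 * k) := by
    have hnn : 0 ≤ L / 2 * ‖x k - xs‖ ^ 2 := by positivity
    have h2 : (k : ℝ) * ((G k + h (x k)) - (gs + h xs)) ≤ L / 2 * ‖x 0 - xs‖ ^ 2 := by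
      linarith
    have h3 : (G k + h (x k)) - (gs + h xs) ≤ L * ‖x 0 - xs‖ ^ 2 / (2 * k) := by
      rw [le_div_iff₀ (by positivity)]
      nlinarith
    linarith
  rw [hG k hk, hgs, ← EReal.coe_add, ← EReal.coe_add, ← EReal.coe_add, EReal.coe_le_coe_iff]
  exact hfinal
end
end

section
/- Let H₁, H₂ be real Hilbert spaces, K : H₁ → H₂ a nonzero bounded linear operator, and v ∈ H₂ such that the solution set S = { u ∈ H₁ : K u = v } is nonempty. Let τ > 0 satisfy τ‖K‖² < 2, and define the Landweber iterates u_0 = 0, u_{k+1} = u_k − τ K*(K u_k − v). Then S has a unique element u† of minimal norm, and u_k converges strongly to u† as k → ∞. -/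
set_option maxHeartbeats 1000000

noncomputable section
open Filter

/-- Convergence of the Landweber iteration to the minimal-norm solution: if
`K : H₁ → H₂` is a nonzero bounded linear operator, `v` is attainable (`S = {u : Ku = v}` is
nonempty) and `τ‖K‖² < 2`, then the solution set has a unique element `u†` of minimal norm and
the Landweber iterates `u_0 = 0`, `u_{k+1} = u_k − τK*(Ku_k − v)` converge strongly to `u†`. -/
theorem landweber_converges_to_minimal_norm_solution
    {H₁ H₂ : Type*} [NormedAddCommGroup H₁] [InnerProductSpace ℝ H₁] [CompleteSpace H₁]
    [NormedAddCommGroup H₂] [InnerProductSpace ℝ H₂] [CompleteSpace H₂]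
    (K : H₁ →L[ℝ] H₂) (hK : K ≠ 0) (v : H₂) (hS : ∃ u : H₁, K u = v)
    (τ : ℝ) (hτ0 : 0 < τ) (hτ : τ * ‖K‖ ^ 2 < 2)
    (u : ℕ → H₁) (hu0 : u 0 = 0)
    (hrec : ∀ k : ℕ, u (k + 1) = u k - τ • ContinuousLinearMap.adjoint K (K (u k) - v)) :
    ∃ udag : H₁,
      (K udag = v ∧ ∀ w : H₁, K w = v → ‖udag‖ ≤ ‖w‖) ∧
      (∀ w : H₁, (K w = v ∧ ∀ w' : H₁, K w' = v → ‖w‖ ≤ ‖w'‖) → w = udag) ∧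
      Tendsto u atTop (nhds udag) := by
  classical
  obtain ⟨u₀, hu₀⟩ := hS
  set A : H₁ →L[ℝ] H₁ := (ContinuousLinearMap.adjoint K).comp K with hAdef
  have hAapp : ∀ x : H₁, A x = ContinuousLinearMap.adjoint K (K x) := fun _ => rfl
  have hAinner : ∀ x y : H₁, (inner ℝ (A x) y : ℝ) = inner ℝ (K x) (K y) := by
    intro x y
    rw [hAapp, ContinuousLinearMap.adjoint_inner_left]
  have hAsym : ∀ x y : H₁, (inner ℝ (A x) y : ℝ) = inner ℝ (A y) x := by
    intro x y
    rw [hAinner, hAinner, real_inner_comm]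
  have hAself : ∀ x : H₁, (inner ℝ (A x) x : ℝ) = ‖K x‖ ^ 2 := by
    intro x; rw [hAinner, real_inner_self_eq_norm_sq]
  set M : ℝ := ‖K‖ ^ 2 with hMdef
  have hM : 0 < M := pow_pos (norm_pos_iff.mpr hK) 2
  -- Cauchy–Schwarz for the positive operator A
  have hCS : ∀ x y : H₁, (inner ℝ (A x) y : ℝ) ^ 2 ≤ inner ℝ (A x) x * inner ℝ (A y) y := by
    intro x y
    have hq : ∀ t : ℝ, 0 ≤ (inner ℝ (A y) y : ℝ) * (t * t) + (2 * inner ℝ (A x) y) * t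
        + (inner ℝ (A x) x : ℝ) := by
      intro t
      have h0 : (0:ℝ) ≤ inner ℝ (A (x + t • y)) (x + t • y) := by
        rw [hAself]; positivity
      have hexp : (inner ℝ (A (x + t • y)) (x + t • y) : ℝ)
          = (inner ℝ (A y) y : ℝ) * (t * t) + (2 * inner ℝ (A x) y) * t + inner ℝ (A x) x := by
        have h1 : A (x + t • y) = A x + t • A y := by rw [map_add, map_smul]
        rw [h1, inner_add_left, inner_add_right, inner_add_right,
          real_inner_smul_left, real_inner_smul_left, real_inner_smul_right,
          real_inner_smul_right, hAsym y x]
        ring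
      linarith [hexp ▸ h0]
    have h := discrim_le_zero hq
    rw [discrim] at h
    nlinarith [h]
  have hAz : ∀ z : H₁, ‖A z‖ ^ 2 ≤ M * inner ℝ (A z) z := by
    intro z
    by_cases hz : A z = 0
    · simp [hz]
    · have h1 := hCS z (A z)
      have h2 : (inner ℝ (A (A z)) (A z) : ℝ) ≤ M * ‖A z‖ ^ 2 := by
        rw [hAself]
        have h3 : ‖K (A z)‖ ≤ ‖K‖ * ‖A z‖ := K.le_opNorm _
        have := norm_nonneg (K (A z))
        nlinarith [norm_nonneg (A z), (K : H₁ →L[ℝ] H₂).opNorm_nonneg]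
      have h3 : (inner ℝ (A z) (A z) : ℝ) = ‖A z‖ ^ 2 := real_inner_self_eq_norm_sq _
      have hinn : (0:ℝ) ≤ inner ℝ (A z) z := by rw [hAself]; positivity
      have hpos : 0 < ‖A z‖ ^ 2 := pow_pos (norm_pos_iff.mpr hz) 2
      nlinarith [mul_le_mul_of_nonneg_left h2 hinn]
  -- the key decrease inequality
  set c : ℝ := τ * (2 - τ * M) / M with hcdef
  have hc : 0 < c := by
    apply div_pos _ hM
    have : τ * M < 2 := hτ
    nlinarith
  have key : ∀ z : H₁, ‖z - τ • A z‖ ^ 2 ≤ ‖z‖ ^ 2 - c * ‖A z‖ ^ 2 := by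
    intro z
    have hi : (inner ℝ z (τ • A z) : ℝ) = τ * inner ℝ (A z) z := by
      rw [real_inner_smul_right, real_inner_comm]
    have hn : ‖τ • A z‖ ^ 2 = τ ^ 2 * ‖A z‖ ^ 2 := by
      rw [norm_smul, Real.norm_eq_abs, mul_pow, sq_abs]
    have hexp : ‖z - τ • A z‖ ^ 2
        = ‖z‖ ^ 2 - 2 * (τ * inner ℝ (A z) z) + τ ^ 2 * ‖A z‖ ^ 2 := by
      rw [norm_sub_sq_real, hi, hn]
    have hcτ : c + τ ^ 2 = 2 * τ / M := by
      rw [hcdef]; field_simp; ring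
    have hAz' := hAz z
    have h4 : (2 * τ / M) * ‖A z‖ ^ 2 ≤ (2 * τ / M) * (M * inner ℝ (A z) z) := by
      apply mul_le_mul_of_nonneg_left hAz'
      positivity
    have h5 : (2 * τ / M) * (M * inner ℝ (A z) z) = 2 * (τ * inner ℝ (A z) z) := by
      field_simp
    have h6 : c * ‖A z‖ ^ 2 = (2 * τ / M) * ‖A z‖ ^ 2 - τ ^ 2 * ‖A z‖ ^ 2 := by
      rw [← hcτ]; ring
    linarith [hexp, h4, h5 ▸ h4]
  -- the minimal norm solution
  set N : Submodule ℝ H₁ := LinearMap.ker (K : H₁ →ₗ[ℝ] H₂) with hNdef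
  haveI : CompleteSpace N := (ContinuousLinearMap.isClosed_ker K).completeSpace_coe
  set udag : H₁ := u₀ - (N.orthogonalProjectionOnto u₀ : H₁) with hud
  have hudS : K udag = v := by
    have hmem : ((N.orthogonalProjectionOnto u₀ : H₁)) ∈ N := (N.orthogonalProjectionOnto u₀).2
    have hker : K ((N.orthogonalProjectionOnto u₀ : H₁)) = 0 := hmem
    rw [hud, map_sub, hker, hu₀, sub_zero]
  have hudO : udag ∈ Nᗮ := N.sub_starProjection_mem_orthogonal u₀
  have hmin : ∀ w : H₁, K w = v → ‖udag‖ ^ 2 + ‖w - udag‖ ^ 2 = ‖w‖ ^ 2 := by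
    intro w hw
    have hwN : w - udag ∈ N := by
      have : K (w - udag) = 0 := by rw [map_sub, hw, hudS, sub_self]
      exact this
    have horth : (inner ℝ udag (w - udag) : ℝ) = 0 := by
      rw [real_inner_comm]
      exact hudO (w - udag) hwN
    have hw' : w = udag + (w - udag) := by abel
    calc ‖udag‖ ^ 2 + ‖w - udag‖ ^ 2
        = ‖udag‖ ^ 2 + 2 * inner ℝ udag (w - udag) + ‖w - udag‖ ^ 2 := by rw [horth]; ring
      _ = ‖udag + (w - udag)‖ ^ 2 := (norm_add_sq_real _ _).symm
      _ = ‖w‖ ^ 2 := by rw [← hw']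
  -- the error iteration
  set T : H₁ → H₁ := fun z => z - τ • A z with hTdef
  set e : ℕ → H₁ := fun k => u k - udag with hedef
  have he0 : e 0 = -udag := by simp [hedef, hu0]
  have heT : ∀ k, e (k + 1) = T (e k) := by
    intro k
    show u (k + 1) - udag = (u k - udag) - τ • A (u k - udag)
    have h : A (u k - udag) = ContinuousLinearMap.adjoint K (K (u k) - v) := by
      rw [hAapp, map_sub, hudS]
    rw [hrec k, h]
    abel
  have hek : ∀ k, e k = T^[k] (e 0) := by
    intro k
    induction k with
    | zero => simp
    | succ n ih => rw [heT n, ih, Function.iterate_succ_apply']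
  have hTsub : ∀ a b : H₁, T a - T b = T (a - b) := by
    intro a b
    show (a - τ • A a) - (b - τ • A b) = (a - b) - τ • A (a - b)
    rw [map_sub, smul_sub]; abel
  have hTnorm : ∀ z : H₁, ‖T z‖ ≤ ‖z‖ := by
    intro z
    have h1 := key z
    have h2 : 0 ≤ c * ‖A z‖ ^ 2 := by positivity
    nlinarith [norm_nonneg (T z), norm_nonneg z]
  have hTcomm : ∀ z : H₁, A (T z) = T (A z) := by
    intro z
    show A (z - τ • A z) = A z - τ • A (A z)
    rw [map_sub, map_smul]
  have hTiter_comm : ∀ (k : ℕ) (y : H₁), T^[k] (A y) = A (T^[k] y) := by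
    intro k y
    induction k with
    | zero => simp
    | succ n ih => rw [Function.iterate_succ_apply', Function.iterate_succ_apply', ih, hTcomm]
  have hTiter_sub : ∀ (k : ℕ) (a b : H₁), ‖T^[k] a - T^[k] b‖ ≤ ‖a - b‖ := by
    intro k a b
    induction k with
    | zero => simp
    | succ n ih =>
      rw [Function.iterate_succ_apply', Function.iterate_succ_apply', hTsub]
      exact le_trans (hTnorm _) ih
  have hsum : ∀ (y : H₁) (k : ℕ),
      ‖T^[k] y‖ ^ 2 + c * (∑ j ∈ Finset.range k, ‖A (T^[j] y)‖ ^ 2) ≤ ‖y‖ ^ 2 := by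
    intro y k
    induction k with
    | zero => simp
    | succ n ih =>
      rw [Finset.sum_range_succ, Function.iterate_succ_apply']
      have := key (T^[n] y)
      nlinarith
  have hmonoA : ∀ (y : H₁) (j k : ℕ), j ≤ k → ‖A (T^[k] y)‖ ≤ ‖A (T^[j] y)‖ := by
    intro y
    have hstep : ∀ n : ℕ, ‖A (T^[n + 1] y)‖ ≤ ‖A (T^[n] y)‖ := by
      intro n
      rw [Function.iterate_succ_apply', hTcomm]
      exact hTnorm _
    have h := antitone_nat_of_succ_le (f := fun n => ‖A (T^[n] y)‖) hstep
    exact fun j k hjk => h hjk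
  have hbound : ∀ (y : H₁) (k : ℕ), (k : ℝ) * ‖A (T^[k] y)‖ ^ 2 ≤ ‖y‖ ^ 2 / c := by
    intro y k
    have h1 : (k : ℝ) * ‖A (T^[k] y)‖ ^ 2 ≤ ∑ j ∈ Finset.range k, ‖A (T^[j] y)‖ ^ 2 := by
      have h2 : ∀ j ∈ Finset.range k, ‖A (T^[k] y)‖ ^ 2 ≤ ‖A (T^[j] y)‖ ^ 2 := by
        intro j hj
        have := hmonoA y j k (le_of_lt (Finset.mem_range.mp hj))
        exact pow_le_pow_left₀ (norm_nonneg _) this 2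
      calc (k : ℝ) * ‖A (T^[k] y)‖ ^ 2
          = (Finset.range k).card • ‖A (T^[k] y)‖ ^ 2 := by
            rw [Finset.card_range, nsmul_eq_mul]
        _ ≤ ∑ j ∈ Finset.range k, ‖A (T^[j] y)‖ ^ 2 := Finset.card_nsmul_le_sum _ _ _ h2
    have h3 : c * (∑ j ∈ Finset.range k, ‖A (T^[j] y)‖ ^ 2) ≤ ‖y‖ ^ 2 := by
      have := hsum y k
      nlinarith [sq_nonneg ‖T^[k] y‖]
    rw [le_div_iff₀ hc]
    calc (k : ℝ) * ‖A (T^[k] y)‖ ^ 2 * c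
        ≤ (∑ j ∈ Finset.range k, ‖A (T^[j] y)‖ ^ 2) * c := by
          apply mul_le_mul_of_nonneg_right h1 (le_of_lt hc)
      _ ≤ ‖y‖ ^ 2 := by linarith
  -- e 0 lies in the closure of the range of A
  have hsubrange : Nᗮ ≤ (LinearMap.range ((A : H₁ →L[ℝ] H₁) : H₁ →ₗ[ℝ] H₁)).topologicalClosure := by
    rw [← Submodule.orthogonal_orthogonal_eq_closure]
    apply Submodule.orthogonal_le
    intro x hx
    have hxx : (inner ℝ (A x) x : ℝ) = 0 := hx (A x) ⟨x, rfl⟩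
    have hKx : ‖K x‖ ^ 2 = 0 := by rw [← hAself]; exact hxx
    have : K x = 0 := by
      rw [pow_eq_zero_iff (two_ne_zero)] at hKx
      exact norm_eq_zero.mp hKx
    exact this
  have he0mem : e 0 ∈ closure ((LinearMap.range ((A : H₁ →L[ℝ] H₁) : H₁ →ₗ[ℝ] H₁) : Submodule ℝ H₁) : Set H₁) := by
    rw [← Submodule.topologicalClosure_coe]
    exact hsubrange (by rw [he0]; exact neg_mem hudO)
  -- assemble
  refine ⟨udag, ⟨hudS, ?_⟩, ?_, ?_⟩
  · intro w hw
    have := hmin w hw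
    nlinarith [norm_nonneg udag, norm_nonneg w, sq_nonneg ‖w - udag‖]
  · rintro w ⟨hw, hwmin⟩
    have h1 := hmin w hw
    have h2 : ‖w‖ ≤ ‖udag‖ := hwmin udag hudS
    have h3 : ‖w - udag‖ ^ 2 ≤ 0 := by nlinarith [norm_nonneg w, norm_nonneg udag]
    have : ‖w - udag‖ = 0 := by nlinarith [norm_nonneg (w - udag)]
    exact sub_eq_zero.mp (norm_eq_zero.mp this)
  · rw [tendsto_iff_norm_sub_tendsto_zero]
    rw [Metric.tendsto_atTop]
    intro ε hε
    obtain ⟨b, hb, hdb⟩ := Metric.mem_closure_iff.mp he0mem (ε / 2) (by positivity)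
    obtain ⟨y, hy⟩ := hb
    set Nk : ℕ := Nat.ceil (‖y‖ ^ 2 / (c * (ε / 2) ^ 2)) + 1 with hNk
    refine ⟨Nk, fun k hk => ?_⟩
    have hk1 : (1 : ℕ) ≤ k := le_trans (Nat.le_add_left 1 _) hk
    have hkR : (‖y‖ ^ 2 / (c * (ε / 2) ^ 2) : ℝ) < k := by
      calc (‖y‖ ^ 2 / (c * (ε / 2) ^ 2) : ℝ)
          ≤ (Nat.ceil (‖y‖ ^ 2 / (c * (ε / 2) ^ 2)) : ℝ) := Nat.le_ceil _
        _ < Nk := by rw [hNk]; exact_mod_cast Nat.lt_succ_self _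
        _ ≤ k := by exact_mod_cast hk
    have hkpos : (0 : ℝ) < k := by exact_mod_cast hk1
    -- the tail estimate
    have hAyk : ‖A (T^[k] y)‖ < ε / 2 := by
      have h1 := hbound y k
      have h2 : ‖y‖ ^ 2 < k * (c * (ε / 2) ^ 2) := by
        rwa [div_lt_iff₀ (by positivity)] at hkR
      have h1c : (k : ℝ) * ‖A (T^[k] y)‖ ^ 2 * c ≤ ‖y‖ ^ 2 := (le_div_iff₀ hc).mp h1
      have h3 : (k : ℝ) * ‖A (T^[k] y)‖ ^ 2 < k * (ε / 2) ^ 2 := by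
        nlinarith [h1c, h2, hc]
      have h4 : ‖A (T^[k] y)‖ ^ 2 < (ε / 2) ^ 2 := by
        nlinarith [h3, hkpos]
      nlinarith [norm_nonneg (A (T^[k] y)), hε]
    have hterm : ‖u k - udag‖ = ‖e k‖ := rfl
    rw [Real.dist_eq, sub_zero, abs_of_nonneg (norm_nonneg _), hterm, hek k]
    calc ‖T^[k] (e 0)‖
        ≤ ‖T^[k] (e 0) - T^[k] (A y)‖ + ‖T^[k] (A y)‖ := by
          have h := norm_add_le (T^[k] (e 0) - T^[k] (A y)) (T^[k] (A y))
          simpa using h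
      _ ≤ ‖e 0 - A y‖ + ‖A (T^[k] y)‖ := by
          rw [← hTiter_comm]
          exact add_le_add_left (hTiter_sub k _ _) _
      _ < ε / 2 + ε / 2 := by
          apply add_lt_add _ hAyk
          rw [← hy] at hdb
          rw [← dist_eq_norm]
          exact hdb
      _ = ε := by ring
end
end

section
/- Let H be a real Hilbert space, g : H → ℝ ∪ {∞} proper, closed and convex, h : H → ℝ convex and L-smooth for some L > 0, and suppose Φ = g + h has a minimiser x* ∈ H. Let (e_k)_{k≥0} ⊆ H be a sequence of gradient errors and define the inexact proximal gradient iterates with step τ = 1/L: x_{k+1} = prox_{τg}( x_k − τ(∇h(x_k) + e_k) ), from any x_0 ∈ H. If the accumulated errors satisfy (1/√k) ∑_{i=0}^{k−1} ‖e_i‖ → 0 as k → ∞, then the averaged iterates x̄_k = (1/k)∑_{j=1}^k x_j satisfy Φ(x̄_k) → Φ(x*) as k → ∞. -/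
noncomputable section
open Filter
open Topology

section Aux

variable {H : Type*} [NormedAddCommGroup H] [InnerProductSpace ℝ H]

local notation "⟪" x "," y "⟫" => @inner ℝ _ _ x y

lemma aux_norm_combo (a b : ℝ) (hab : a + b = 1) (u v : H) :
    ‖a • u + b • v‖ ^ 2 = a * ‖u‖ ^ 2 + b * ‖v‖ ^ 2 - a * b * ‖u - v‖ ^ 2 := by
  have hb : b = 1 - a := by linarith
  subst hb
  rw [← real_inner_self_eq_norm_sq, ← real_inner_self_eq_norm_sq,
    ← real_inner_self_eq_norm_sq, ← real_inner_self_eq_norm_sq]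
  simp only [inner_add_left, inner_add_right, inner_sub_left, inner_sub_right,
    real_inner_smul_left, real_inner_smul_right]
  have hc : ⟪v,u⟫ = ⟪u,v⟫ := real_inner_comm u v
  rw [hc]
  ring

lemma aux_prox_ne_top {g : H → EReal} {τ : ℝ} {z p y0 : H}
    (hy0 : g y0 ≠ ⊤) (hp : IsProxPt g τ z p) : g p ≠ ⊤ := by
  intro htop
  have h := hp.1 y0
  rw [htop, EReal.top_add_coe] at h
  exact (EReal.add_lt_top hy0 (EReal.coe_ne_top _)).ne (top_le_iff.mp h)

lemma aux_three_point {g : H → EReal} (hgbot : ∀ u, g u ≠ ⊥) (hgconv : ConvexFnE g)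
    {τ : ℝ} (hτ : 0 < τ) {z p : H} (hp : IsProxPt g τ z p) (hpt : g p ≠ ⊤)
    {y : H} (hyt : g y ≠ ⊤) :
    (g p).toReal + 1 / (2 * τ) * ‖p - z‖ ^ 2 + 1 / (2 * τ) * ‖y - p‖ ^ 2
      ≤ (g y).toReal + 1 / (2 * τ) * ‖y - z‖ ^ 2 := by
  set c : ℝ := 1 / (2 * τ) with hc
  have hcpos : 0 < c := by positivity
  set Gp := (g p).toReal with hGp
  set Gy := (g y).toReal with hGy
  have hgp : g p = (Gp : EReal) := (EReal.coe_toReal hpt (hgbot p)).symm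
  have hgy : g y = (Gy : EReal) := (EReal.coe_toReal hyt (hgbot y)).symm
  have key : ∀ t : ℝ, 0 < t → t ≤ 1 →
      Gp + c * ‖p - z‖ ^ 2 + (1 - t) * (c * ‖y - p‖ ^ 2) ≤ Gy + c * ‖y - z‖ ^ 2 := by
    intro t ht0 ht1
    have ha : (0:ℝ) ≤ 1 - t := by linarith
    have hab : (1 - t) + t = 1 := by ring
    have hconv := hgconv p y (1 - t) t ha ht0.le hab
    set w : H := (1 - t) • p + t • y with hw
    have h1 : g w ≤ (((1 - t) * Gp + t * Gy : ℝ) : EReal) := by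
      rw [hgp, hgy] at hconv
      rw [EReal.coe_add, EReal.coe_mul, EReal.coe_mul]
      exact hconv
    have hwt : g w ≠ ⊤ := (lt_of_le_of_lt h1 (EReal.coe_lt_top _)).ne
    have hgw : g w = (((g w).toReal : ℝ) : EReal) := (EReal.coe_toReal hwt (hgbot w)).symm
    set Gw := (g w).toReal with hGw
    have h1' : Gw ≤ (1 - t) * Gp + t * Gy := by
      rw [hgw] at h1
      exact_mod_cast h1
    have h2 := hp.1 w
    rw [hgp, hgw, ← EReal.coe_add, ← EReal.coe_add, EReal.coe_le_coe_iff] at h2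
    have hz1 : (1 - t) • z + t • z = z := by rw [← add_smul, hab, one_smul]
    have hwz : w - z = (1 - t) • (p - z) + t • (y - z) := by
      calc w - z = (1 - t) • p + t • y - ((1 - t) • z + t • z) := by rw [hz1]
        _ = (1 - t) • (p - z) + t • (y - z) := by
            rw [smul_sub, smul_sub]; abel
    have hnw : ‖w - z‖ ^ 2
        = (1 - t) * ‖p - z‖ ^ 2 + t * ‖y - z‖ ^ 2 - (1 - t) * t * ‖y - p‖ ^ 2 := by
      rw [hwz, aux_norm_combo (1 - t) t hab]
      have : (p - z) - (y - z) = p - y := by abel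
      rw [this, norm_sub_rev p y]
    rw [hnw] at h2
    have h3 : t * (Gp + c * ‖p - z‖ ^ 2 + (1 - t) * (c * ‖y - p‖ ^ 2))
        ≤ t * (Gy + c * ‖y - z‖ ^ 2) := by nlinarith [h2, h1']
    exact le_of_mul_le_mul_left h3 ht0
  refine le_of_forall_sub_le ?_
  intro ε hε
  set K := c * ‖y - p‖ ^ 2 with hK
  have hK0 : 0 ≤ K := by positivity
  set t : ℝ := min 1 (ε / (K + 1)) with ht
  have ht0 : 0 < t := lt_min one_pos (by positivity)
  have ht1 : t ≤ 1 := min_le_left _ _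
  have h := key t ht0 ht1
  have htK : t * K ≤ ε := by
    have h1 : t ≤ ε / (K + 1) := min_le_right _ _
    have h2 : t * K ≤ (ε / (K + 1)) * K := mul_le_mul_of_nonneg_right h1 hK0
    have h3 : (ε / (K + 1)) * K ≤ ε := by
      rw [div_mul_eq_mul_div, div_le_iff₀ (by positivity)]
      nlinarith
    linarith
  nlinarith [h]


variable [CompleteSpace H]

lemma aux_hasDerivAt {h : H → ℝ} (hdiff : Differentiable ℝ h) (x d : H) (t : ℝ) :
    HasDerivAt (fun s : ℝ => h (x + s • d)) ⟪gradient h (x + t • d), d⟫ t := by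
  have hc : HasDerivAt (fun s : ℝ => x + s • d) d t := by
    simpa using ((hasDerivAt_id t).smul_const d).const_add x
  have hg : HasFDerivAt h (InnerProductSpace.toDual ℝ H (gradient h (x + t • d)))
      (x + t • d) := (hdiff (x + t • d)).hasGradientAt.hasFDerivAt
  simpa [InnerProductSpace.toDual_apply_apply, Function.comp_def] using hg.comp_hasDerivAt t hc

lemma aux_grad_continuous {h : H → ℝ} {L : ℝ} (hL : 0 < L)
    (hlip : ∀ u v : H, ‖gradient h u - gradient h v‖ ≤ L * ‖u - v‖) :
    Continuous (gradient h) := by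
  have hgl : LipschitzWith (Real.toNNReal L) (gradient h) := by
    apply LipschitzWith.of_dist_le_mul
    intro u v
    rw [dist_eq_norm, dist_eq_norm, Real.coe_toNNReal _ hL.le]
    exact hlip u v
  exact hgl.continuous

lemma aux_descent {h : H → ℝ} {L : ℝ} (hL : 0 < L) (hdiff : Differentiable ℝ h)
    (hlip : ∀ u v : H, ‖gradient h u - gradient h v‖ ≤ L * ‖u - v‖) (x p : H) :
    h p ≤ h x + ⟪gradient h x, p - x⟫ + L / 2 * ‖p - x‖ ^ 2 := by
  set d := p - x with hd
  set ψ : ℝ → ℝ := fun t => ⟪gradient h (x + t • d), d⟫ with hψ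
  have hcont : Continuous ψ := by
    apply Continuous.inner
    · exact (aux_grad_continuous hL hlip).comp (by continuity)
    · exact continuous_const
  have hftc : ∫ t in (0:ℝ)..1, ψ t = h (x + (1:ℝ) • d) - h (x + (0:ℝ) • d) :=
    intervalIntegral.integral_eq_sub_of_hasDerivAt
      (fun t _ => aux_hasDerivAt hdiff x d t) (hcont.intervalIntegrable 0 1)
  have hbound : ∀ t ∈ Set.Icc (0:ℝ) 1, ψ t ≤ ψ 0 + L * ‖d‖ ^ 2 * t := by
    intro t ht
    have h1 : ψ t - ψ 0 = ⟪gradient h (x + t • d) - gradient h (x + (0:ℝ) • d), d⟫ := by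
      rw [hψ]
      simp [inner_sub_left]
    have h2 : ⟪gradient h (x + t • d) - gradient h (x + (0:ℝ) • d), d⟫
        ≤ L * (t * ‖d‖) * ‖d‖ := by
      calc ⟪gradient h (x + t • d) - gradient h (x + (0:ℝ) • d), d⟫
          ≤ ‖gradient h (x + t • d) - gradient h (x + (0:ℝ) • d)‖ * ‖d‖ :=
            real_inner_le_norm _ _
        _ ≤ (L * ‖(x + t • d) - (x + (0:ℝ) • d)‖) * ‖d‖ :=
            mul_le_mul_of_nonneg_right (hlip _ _) (norm_nonneg d)
        _ = L * (t * ‖d‖) * ‖d‖ := by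
            congr 2
            simp [norm_smul, abs_of_nonneg ht.1]
    nlinarith [h1, h2]
  have hintle : ∫ t in (0:ℝ)..1, ψ t ≤ ∫ t in (0:ℝ)..1, (ψ 0 + L * ‖d‖ ^ 2 * t) := by
    apply intervalIntegral.integral_mono_on zero_le_one (hcont.intervalIntegrable 0 1)
    · exact (continuous_const.add (continuous_const.mul continuous_id')).intervalIntegrable 0 1
    · exact hbound
  have hval : ∫ t in (0:ℝ)..1, (ψ 0 + L * ‖d‖ ^ 2 * t) = ψ 0 + L * ‖d‖ ^ 2 / 2 := by
    rw [intervalIntegral.integral_add (f := fun _ => ψ 0) (g := fun t : ℝ => L * ‖d‖ ^ 2 * t)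
      (intervalIntegrable_const)
      ((continuous_const.mul continuous_id').intervalIntegrable 0 1)]
    rw [intervalIntegral.integral_const_mul]
    simp [integral_id]
    ring
  have hψ0 : ψ 0 = ⟪gradient h x, d⟫ := by
    rw [hψ]
    simp
  have h1 : h (x + (1:ℝ) • d) = h p := by rw [hd]; norm_num
  have h0 : h (x + (0:ℝ) • d) = h x := by norm_num
  rw [h1, h0] at hftc
  rw [← hψ0]
  nlinarith [hftc, hintle, hval]

lemma aux_grad_convex {h : H → ℝ} (hconv : ConvexOn ℝ Set.univ h)
    (hdiff : Differentiable ℝ h) (x y : H) :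
    h x + ⟪gradient h x, y - x⟫ ≤ h y := by
  set d := y - x with hd
  have hder : HasDerivAt (fun s : ℝ => h (x + s • d)) ⟪gradient h (x + (0:ℝ) • d), d⟫ 0 :=
    aux_hasDerivAt hdiff x d 0
  have hslope : ∀ t : ℝ, 0 < t → t ≤ 1 → (h (x + t • d) - h x) / t ≤ h y - h x := by
    intro t ht0 ht1
    have hcv := hconv.2 (Set.mem_univ x) (Set.mem_univ y)
      (show (0:ℝ) ≤ 1 - t by linarith) ht0.le (show (1 - t) + t = 1 by ring)
    have hxy : (1 - t) • x + t • y = x + t • d := by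
      rw [hd, sub_smul, one_smul, smul_sub]
      abel
    rw [hxy] at hcv
    rw [div_le_iff₀ ht0]
    simp only [smul_eq_mul] at hcv
    nlinarith [hcv]
  have htend : Tendsto (slope (fun s : ℝ => h (x + s • d)) 0) (𝓝[>] (0:ℝ))
      (𝓝 ⟪gradient h (x + (0:ℝ) • d), d⟫) :=
    (hasDerivAt_iff_tendsto_slope.mp hder).mono_left
      (nhdsWithin_mono 0 (fun t ht => ne_of_gt ht))
  have hle : ⟪gradient h (x + (0:ℝ) • d), d⟫ ≤ h y - h x := by
    apply le_of_tendsto htend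
    filter_upwards [Ioc_mem_nhdsGT (zero_lt_one)] with t ht
    rw [slope_def_field]
    have h0 : h (x + (0:ℝ) • d) = h x := by norm_num
    rw [h0, sub_zero]
    exact hslope t ht.1 ht.2
  have h00 : (x + (0:ℝ) • d) = x := by norm_num
  rw [h00] at hle
  linarith

lemma aux_jensen_g {g : H → EReal} (hgbot : ∀ u, g u ≠ ⊥) (hgconv : ConvexFnE g)
    (v : ℕ → H) (B : ℕ → ℝ) (hB : ∀ j, 1 ≤ j → g (v j) = ((B j : ℝ) : EReal)) :
    ∀ k : ℕ, 1 ≤ k →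
      g ((k : ℝ)⁻¹ • ∑ j ∈ Finset.Icc 1 k, v j)
        ≤ (((k : ℝ)⁻¹ * ∑ j ∈ Finset.Icc 1 k, B j : ℝ) : EReal) := by
  intro k
  induction k with
  | zero => omega
  | succ n ih =>
    intro _
    rcases Nat.eq_zero_or_pos n with hn | hn
    · subst hn
      simp only [zero_add, Finset.Icc_self, Finset.sum_singleton, Nat.cast_one, inv_one,
        one_smul, one_mul]
      exact le_of_eq (hB 1 le_rfl)
    · have ihn := ih hn
      have hn0 : (0:ℝ) < n := by exact_mod_cast hn
      have hsum : ∑ j ∈ Finset.Icc 1 (n + 1), v j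
          = (∑ j ∈ Finset.Icc 1 n, v j) + v (n + 1) := Finset.sum_Icc_succ_top (by omega) v
      have hsumB : ∑ j ∈ Finset.Icc 1 (n + 1), B j
          = (∑ j ∈ Finset.Icc 1 n, B j) + B (n + 1) := Finset.sum_Icc_succ_top (by omega) B
      set a : ℝ := n / (n + 1) with hadef
      set b : ℝ := 1 / (n + 1) with hbdef
      have ha : 0 ≤ a := by positivity
      have hb : 0 ≤ b := by positivity
      have hab : a + b = 1 := by rw [hadef, hbdef]; field_simp; try ring
      have hcombo : ((n + 1 : ℕ) : ℝ)⁻¹ • ∑ j ∈ Finset.Icc 1 (n + 1), v j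
          = a • ((n : ℝ)⁻¹ • ∑ j ∈ Finset.Icc 1 n, v j) + b • v (n + 1) := by
        rw [hsum, smul_add, smul_smul]
        have e1 : a * (n : ℝ)⁻¹ = ((n + 1 : ℕ) : ℝ)⁻¹ := by
          rw [hadef]
          push_cast
          field_simp
          try ring
        have e2 : b = ((n + 1 : ℕ) : ℝ)⁻¹ := by
          rw [hbdef]
          push_cast
          rw [one_div]
        rw [e1, e2]
      rw [hcombo]
      have hconv2 := hgconv ((n : ℝ)⁻¹ • ∑ j ∈ Finset.Icc 1 n, v j) (v (n + 1)) a b ha hb hab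
      have hxn_ne_top : g ((n : ℝ)⁻¹ • ∑ j ∈ Finset.Icc 1 n, v j) ≠ ⊤ :=
        (lt_of_le_of_lt ihn (EReal.coe_lt_top _)).ne
      set Gn := (g ((n : ℝ)⁻¹ • ∑ j ∈ Finset.Icc 1 n, v j)).toReal with hGn
      have hgxn : g ((n : ℝ)⁻¹ • ∑ j ∈ Finset.Icc 1 n, v j) = (Gn : EReal) :=
        (EReal.coe_toReal hxn_ne_top (hgbot _)).symm
      have hGnle : Gn ≤ (n : ℝ)⁻¹ * ∑ j ∈ Finset.Icc 1 n, B j := by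
        rw [hgxn] at ihn
        exact_mod_cast ihn
      rw [hgxn, hB (n + 1) (by omega)] at hconv2
      rw [← EReal.coe_mul, ← EReal.coe_mul, ← EReal.coe_add] at hconv2
      refine le_trans hconv2 ?_
      rw [EReal.coe_le_coe_iff]
      have hstep : a * Gn + b * B (n + 1)
          ≤ a * ((n : ℝ)⁻¹ * ∑ j ∈ Finset.Icc 1 n, B j) + b * B (n + 1) := by
        have := mul_le_mul_of_nonneg_left hGnle ha
        linarith
      refine le_trans hstep (le_of_eq ?_)
      rw [hsumB, hadef, hbdef]
      push_cast
      field_simp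
      try ring

end Aux

/-- Convergence of inexact proximal gradient descent: with step `τ = 1/L`, gradient errors
`e_k`, and iterates `x_{k+1} = prox_{τg}(x_k − τ(∇h(x_k) + e_k))`, if the accumulated errors
satisfy `(1/√k)∑_{i<k}‖e_i‖ → 0`, then the averaged iterates `x̄_k = (1/k)∑_{j=1}^k x_j`
satisfy `Φ(x̄_k) → Φ(x*)`, where `Φ = g + h` and `x*` is a minimiser of `Φ`. -/
theorem inexact_proximal_gradient_average_converges
    {H : Type*} [NormedAddCommGroup H] [InnerProductSpace ℝ H] [CompleteSpace H]
    (g : H → EReal) (hgbot : ∀ x, g x ≠ ⊥) (hgproper : ∃ x, g x ≠ ⊤)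
    (hgclosed : LowerSemicontinuous g) (hgconv : ConvexFnE g)
    (h : H → ℝ) (L : ℝ) (hL : 0 < L)
    (hconv : ConvexOn ℝ Set.univ h) (hdiff : Differentiable ℝ h)
    (hlip : ∀ x y : H, ‖gradient h x - gradient h y‖ ≤ L * ‖x - y‖)
    (xs : H) (hmin : ∀ y : H, g xs + (h xs : EReal) ≤ g y + (h y : EReal))
    (e : ℕ → H) (x : ℕ → H)
    (hrec : ∀ k : ℕ,
      IsProxPt g (1 / L) (x k - (1 / L) • (gradient h (x k) + e k)) (x (k + 1)))
    (herr : Tendsto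
      (fun k : ℕ => (Real.sqrt k)⁻¹ * ∑ i ∈ Finset.range k, ‖e i‖) atTop (nhds 0)) :
    Tendsto
      (fun k : ℕ =>
        g ((k : ℝ)⁻¹ • ∑ j ∈ Finset.Icc 1 k, x j) +
          ((h ((k : ℝ)⁻¹ • ∑ j ∈ Finset.Icc 1 k, x j) : ℝ) : EReal))
      atTop (nhds (g xs + (h xs : EReal))) := by
  have hLne : L ≠ 0 := ne_of_gt hL
  have hτ : (0:ℝ) < 1 / L := by positivity
  obtain ⟨y0, hy0⟩ := hgproper
  have hxs_ne_top : g xs ≠ ⊤ := by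
    intro htop
    have h1 := hmin y0
    rw [htop, EReal.top_add_coe] at h1
    exact (EReal.add_lt_top hy0 (EReal.coe_ne_top _)).ne (top_le_iff.mp h1)
  have hxk_ne_top : ∀ k : ℕ, g (x (k + 1)) ≠ ⊤ := fun k => aux_prox_ne_top hy0 (hrec k)
  have hmin' : ∀ u : H, g u ≠ ⊤ → (g xs).toReal + h xs ≤ (g u).toReal + h u := by
    intro u hu
    have h1 := hmin u
    rw [← EReal.coe_toReal hxs_ne_top (hgbot xs), ← EReal.coe_toReal hu (hgbot u),
      ← EReal.coe_add, ← EReal.coe_add, EReal.coe_le_coe_iff] at h1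
    exact h1
  -- key one-step inequality
  have key : ∀ k : ℕ,
      (g (x (k+1))).toReal + h (x (k+1)) + L / 2 * ‖x (k+1) - xs‖ ^ 2
        ≤ (g xs).toReal + h xs + ‖e k‖ * ‖x (k+1) - xs‖ + L / 2 * ‖x k - xs‖ ^ 2 := by
    intro k
    have h3 := aux_three_point hgbot hgconv hτ (hrec k) (hxk_ne_top k) hxs_ne_top
    have hcoef : 1 / (2 * (1 / L)) = L / 2 := by field_simp; try ring
    rw [hcoef] at h3
    have hpz : x (k+1) - (x k - (1 / L) • (gradient h (x k) + e k))
        = (x (k+1) - x k) + (1 / L) • (gradient h (x k) + e k) := by abel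
    have hsz : xs - (x k - (1 / L) • (gradient h (x k) + e k))
        = (xs - x k) + (1 / L) • (gradient h (x k) + e k) := by abel
    rw [hpz, hsz] at h3
    have hexp : ∀ u : H, L / 2 * ‖u + (1 / L) • (gradient h (x k) + e k)‖ ^ 2
        = L / 2 * ‖u‖ ^ 2 + inner ℝ u (gradient h (x k) + e k)
          + L / 2 * ‖(1 / L) • (gradient h (x k) + e k)‖ ^ 2 := by
      intro u
      rw [norm_add_sq_real, real_inner_smul_right]
      field_simp
    rw [hexp (x (k+1) - x k), hexp (xs - x k)] at h3
    have hdesc := aux_descent hL hdiff hlip (x k) (x (k+1))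
    have hcv := aux_grad_convex hconv hdiff (x k) xs
    have hip : (inner ℝ (x (k+1) - x k) (gradient h (x k) + e k) : ℝ)
        = inner ℝ (x (k+1) - x k) (gradient h (x k)) + inner ℝ (x (k+1) - x k) (e k) :=
      inner_add_right _ _ _
    have his : (inner ℝ (xs - x k) (gradient h (x k) + e k) : ℝ)
        = inner ℝ (xs - x k) (gradient h (x k)) + inner ℝ (xs - x k) (e k) :=
      inner_add_right _ _ _
    have hc1 : (inner ℝ (gradient h (x k)) (x (k+1) - x k) : ℝ)
        = inner ℝ (x (k+1) - x k) (gradient h (x k)) := real_inner_comm _ _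
    have hc2 : (inner ℝ (gradient h (x k)) (xs - x k) : ℝ)
        = inner ℝ (xs - x k) (gradient h (x k)) := real_inner_comm _ _
    have hsub : (inner ℝ (xs - x k) (e k) : ℝ) - inner ℝ (x (k+1) - x k) (e k)
        = inner ℝ (xs - x (k+1)) (e k) := by
      rw [← inner_sub_left]
      congr 1
      abel
    have hcs : (inner ℝ (xs - x (k+1)) (e k) : ℝ) ≤ ‖e k‖ * ‖x (k+1) - xs‖ := by
      calc (inner ℝ (xs - x (k+1)) (e k) : ℝ) ≤ ‖xs - x (k+1)‖ * ‖e k‖ := real_inner_le_norm _ _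
        _ = ‖e k‖ * ‖x (k+1) - xs‖ := by rw [norm_sub_rev]; ring
    have hns : ‖xs - x (k+1)‖ = ‖x (k+1) - xs‖ := norm_sub_rev _ _
    have hns2 : ‖xs - x k‖ = ‖x k - xs‖ := norm_sub_rev _ _
    rw [hns, hns2] at h3
    linarith [h3, hdesc, hcv, hip, his, hc1, hc2, hsub, hcs]
  -- positivity of gaps
  have hpos : ∀ k : ℕ,
      0 ≤ (g (x (k+1))).toReal + h (x (k+1)) - ((g xs).toReal + h xs) := by
    intro k
    have := hmin' (x (k+1)) (hxk_ne_top k)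
    linarith
  -- distance recursion
  have hstep : ∀ k : ℕ, L * ‖x (k+1) - xs‖ ≤ L * ‖x k - xs‖ + 2 * ‖e k‖ := by
    intro k
    have hk := key k
    have h0 := hpos k
    rcases le_or_gt (‖x (k+1) - xs‖) (‖x k - xs‖) with hle | hlt
    · nlinarith [norm_nonneg (e k)]
    · have hd0 : (0:ℝ) ≤ ‖x k - xs‖ := norm_nonneg _
      have hsumpos : 0 < ‖x (k+1) - xs‖ + ‖x k - xs‖ := by linarith
      have h1' : (L/2 * (‖x (k+1) - xs‖ - ‖x k - xs‖)) * (‖x (k+1) - xs‖ + ‖x k - xs‖)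
          ≤ ‖e k‖ * (‖x (k+1) - xs‖ + ‖x k - xs‖) := by
        nlinarith [hk, h0, mul_nonneg (norm_nonneg (e k)) hd0]
      have h2 := le_of_mul_le_mul_right h1' hsumpos
      linarith
  -- accumulated error monotonicity
  have hAmono : ∀ i j : ℕ, i ≤ j →
      (∑ m ∈ Finset.range i, ‖e m‖) ≤ ∑ m ∈ Finset.range j, ‖e m‖ := by
    intro i j hij
    exact Finset.sum_le_sum_of_subset_of_nonneg (Finset.range_subset_range.2 hij)
      (fun _ _ _ => norm_nonneg _)
  have hA0 : ∀ k : ℕ, 0 ≤ ∑ m ∈ Finset.range k, ‖e m‖ :=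
    fun k => Finset.sum_nonneg fun m _ => norm_nonneg _
  -- distance bound
  have hdbound : ∀ k : ℕ,
      L * ‖x k - xs‖ ≤ L * ‖x 0 - xs‖ + 2 * ∑ m ∈ Finset.range k, ‖e m‖ := by
    intro k
    induction k with
    | zero => simp
    | succ n ihn =>
      have := hstep n
      rw [Finset.sum_range_succ]
      linarith
  -- summed bound
  have hsumb : ∀ k : ℕ,
      L * (∑ j ∈ Finset.range k,
          ((g (x (j+1))).toReal + h (x (j+1)) - ((g xs).toReal + h xs)))
        ≤ (∑ m ∈ Finset.range k, ‖e m‖) *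
            (L * ‖x 0 - xs‖ + 2 * ∑ m ∈ Finset.range k, ‖e m‖)
          + L^2 / 2 * ‖x 0 - xs‖ ^ 2 := by
    intro k
    have h1 : ∀ j ∈ Finset.range k,
        L * ((g (x (j+1))).toReal + h (x (j+1)) - ((g xs).toReal + h xs))
          ≤ ‖e j‖ * (L * ‖x 0 - xs‖ + 2 * ∑ m ∈ Finset.range k, ‖e m‖)
            + L^2 / 2 * (‖x j - xs‖ ^ 2 - ‖x (j+1) - xs‖ ^ 2) := by
      intro j hj
      have hk := key j
      have hb : L * ‖x (j+1) - xs‖ ≤ L * ‖x 0 - xs‖ + 2 * ∑ m ∈ Finset.range k, ‖e m‖ := by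
        have h2 := hdbound (j+1)
        have h3 : (∑ m ∈ Finset.range (j+1), ‖e m‖) ≤ ∑ m ∈ Finset.range k, ‖e m‖ :=
          hAmono _ _ (Finset.mem_range.1 hj)
        linarith
      nlinarith [mul_le_mul_of_nonneg_left hk hL.le,
        mul_le_mul_of_nonneg_left hb (norm_nonneg (e j))]
    calc L * (∑ j ∈ Finset.range k,
          ((g (x (j+1))).toReal + h (x (j+1)) - ((g xs).toReal + h xs)))
        = ∑ j ∈ Finset.range k,
            L * ((g (x (j+1))).toReal + h (x (j+1)) - ((g xs).toReal + h xs)) := by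
          rw [Finset.mul_sum]
      _ ≤ ∑ j ∈ Finset.range k,
            (‖e j‖ * (L * ‖x 0 - xs‖ + 2 * ∑ m ∈ Finset.range k, ‖e m‖)
              + L^2 / 2 * (‖x j - xs‖ ^ 2 - ‖x (j+1) - xs‖ ^ 2)) := Finset.sum_le_sum h1
      _ = (∑ m ∈ Finset.range k, ‖e m‖) *
            (L * ‖x 0 - xs‖ + 2 * ∑ m ∈ Finset.range k, ‖e m‖)
          + L^2 / 2 * (‖x 0 - xs‖ ^ 2 - ‖x k - xs‖ ^ 2) := by
          rw [Finset.sum_add_distrib, ← Finset.sum_mul, ← Finset.mul_sum,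
            Finset.sum_range_sub' (fun j => ‖x j - xs‖ ^ 2)]
      _ ≤ _ := by nlinarith [sq_nonneg (‖x k - xs‖), hL]
  -- Jensen for g
  have hBj : ∀ j, 1 ≤ j → g (x j) = (((g (x j)).toReal : ℝ) : EReal) := by
    intro j hj
    obtain ⟨m, rfl⟩ : ∃ m, j = m + 1 := ⟨j - 1, by omega⟩
    exact (EReal.coe_toReal (hxk_ne_top m) (hgbot _)).symm
  have hJg : ∀ k : ℕ, 1 ≤ k → g ((k:ℝ)⁻¹ • ∑ j ∈ Finset.Icc 1 k, x j)
      ≤ (((k:ℝ)⁻¹ * ∑ j ∈ Finset.Icc 1 k, (g (x j)).toReal : ℝ) : EReal) :=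
    fun k hk => aux_jensen_g hgbot hgconv x (fun j => (g (x j)).toReal) hBj k hk
  have hgbar_ne_top : ∀ k : ℕ, 1 ≤ k → g ((k:ℝ)⁻¹ • ∑ j ∈ Finset.Icc 1 k, x j) ≠ ⊤ :=
    fun k hk => (lt_of_le_of_lt (hJg k hk) (EReal.coe_lt_top _)).ne
  -- Jensen for h
  have hJh : ∀ k : ℕ, 1 ≤ k → h ((k:ℝ)⁻¹ • ∑ j ∈ Finset.Icc 1 k, x j)
      ≤ (k:ℝ)⁻¹ * ∑ j ∈ Finset.Icc 1 k, h (x j) := by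
    intro k hk
    have hk0 : ((k:ℕ):ℝ) ≠ 0 := Nat.cast_ne_zero.2 (by omega)
    have hw1 : ∑ _j ∈ Finset.Icc 1 k, (k:ℝ)⁻¹ = 1 := by
      rw [Finset.sum_const, Nat.card_Icc, nsmul_eq_mul]
      simp only [Nat.add_sub_cancel]
      field_simp
    have hj := hconv.map_sum_le (t := Finset.Icc 1 k) (w := fun _ => (k:ℝ)⁻¹) (p := x)
      (fun i _ => by positivity) hw1 (fun i _ => Set.mem_univ (x i))
    calc h ((k:ℝ)⁻¹ • ∑ j ∈ Finset.Icc 1 k, x j)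
        = h (∑ j ∈ Finset.Icc 1 k, (k:ℝ)⁻¹ • x j) := by rw [Finset.smul_sum]
      _ ≤ ∑ j ∈ Finset.Icc 1 k, (k:ℝ)⁻¹ * h (x j) := hj
      _ = (k:ℝ)⁻¹ * ∑ j ∈ Finset.Icc 1 k, h (x j) := by rw [Finset.mul_sum]
  have hGbar : ∀ k : ℕ, 1 ≤ k →
      (g ((k:ℝ)⁻¹ • ∑ j ∈ Finset.Icc 1 k, x j)).toReal
        ≤ (k:ℝ)⁻¹ * ∑ j ∈ Finset.Icc 1 k, (g (x j)).toReal := by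
    intro k hk
    have h1 := hJg k hk
    rw [← EReal.coe_toReal (hgbar_ne_top k hk) (hgbot _)] at h1
    exact_mod_cast h1
  -- reindexing
  have hreindex : ∀ (f : ℕ → ℝ) (k : ℕ), ∑ j ∈ Finset.Icc 1 k, f j
      = ∑ j ∈ Finset.range k, f (j+1) := by
    intro f k
    rw [← Finset.Ico_add_one_right_eq_Icc, Finset.sum_Ico_eq_sum_range]
    have : k + 1 - 1 = k := by omega
    rw [this]
    exact Finset.sum_congr rfl fun i _ => by rw [add_comm]
  -- upper bound for the averaged objective
  have hVup : ∀ k : ℕ, 1 ≤ k →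
      (g ((k:ℝ)⁻¹ • ∑ j ∈ Finset.Icc 1 k, x j)).toReal
        + h ((k:ℝ)⁻¹ • ∑ j ∈ Finset.Icc 1 k, x j)
      ≤ ((g xs).toReal + h xs) + (k:ℝ)⁻¹ * ∑ j ∈ Finset.range k,
          ((g (x (j+1))).toReal + h (x (j+1)) - ((g xs).toReal + h xs)) := by
    intro k hk
    have hk0 : ((k:ℕ):ℝ) ≠ 0 := Nat.cast_ne_zero.2 (by omega)
    have h1 := hGbar k hk
    have h2 := hJh k hk
    have h3 : (k:ℝ)⁻¹ * ∑ j ∈ Finset.Icc 1 k, (g (x j)).toReal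
        + (k:ℝ)⁻¹ * ∑ j ∈ Finset.Icc 1 k, h (x j)
        = (k:ℝ)⁻¹ * ∑ j ∈ Finset.range k, ((g (x (j+1))).toReal + h (x (j+1))) := by
      rw [hreindex (fun j => (g (x j)).toReal) k, hreindex (fun j => h (x j)) k,
        ← mul_add, ← Finset.sum_add_distrib]
    have h4 : ∑ j ∈ Finset.range k, ((g (x (j+1))).toReal + h (x (j+1)))
        = (∑ j ∈ Finset.range k,
            ((g (x (j+1))).toReal + h (x (j+1)) - ((g xs).toReal + h xs)))
          + (k:ℝ) * ((g xs).toReal + h xs) := by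
      rw [Finset.sum_sub_distrib, Finset.sum_const, Finset.card_range, nsmul_eq_mul]
      ring
    have h5 : (k:ℝ)⁻¹ * ((∑ j ∈ Finset.range k,
            ((g (x (j+1))).toReal + h (x (j+1)) - ((g xs).toReal + h xs)))
          + (k:ℝ) * ((g xs).toReal + h xs))
        = ((g xs).toReal + h xs) + (k:ℝ)⁻¹ * ∑ j ∈ Finset.range k,
            ((g (x (j+1))).toReal + h (x (j+1)) - ((g xs).toReal + h xs)) := by
      field_simp
      ring
    calc (g ((k:ℝ)⁻¹ • ∑ j ∈ Finset.Icc 1 k, x j)).toReal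
          + h ((k:ℝ)⁻¹ • ∑ j ∈ Finset.Icc 1 k, x j)
        ≤ (k:ℝ)⁻¹ * ∑ j ∈ Finset.Icc 1 k, (g (x j)).toReal
          + (k:ℝ)⁻¹ * ∑ j ∈ Finset.Icc 1 k, h (x j) := add_le_add h1 h2
      _ = (k:ℝ)⁻¹ * ∑ j ∈ Finset.range k, ((g (x (j+1))).toReal + h (x (j+1))) := h3
      _ = (k:ℝ)⁻¹ * ((∑ j ∈ Finset.range k,
            ((g (x (j+1))).toReal + h (x (j+1)) - ((g xs).toReal + h xs)))
          + (k:ℝ) * ((g xs).toReal + h xs)) := by rw [h4]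
      _ = _ := h5
  -- limits
  have hsq : Tendsto (fun k : ℕ => (Real.sqrt k)⁻¹) atTop (𝓝 0) := by
    have h2 := (Real.continuous_sqrt.tendsto 0).comp (tendsto_inv_atTop_nhds_zero_nat (𝕜 := ℝ))
    simpa [Function.comp_def, Real.sqrt_inv] using h2
  have t3 := tendsto_inv_atTop_nhds_zero_nat (𝕜 := ℝ)
  have t1 : Tendsto (fun k : ℕ => ((k:ℝ))⁻¹ * ∑ i ∈ Finset.range k, ‖e i‖)
      atTop (𝓝 0) := by
    have hm := herr.mul hsq
    rw [mul_zero] at hm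
    refine hm.congr' ?_
    filter_upwards [eventually_ge_atTop 1] with k hk
    have hkpos : (0:ℝ) < (k:ℝ) := by exact_mod_cast Nat.lt_of_lt_of_le Nat.zero_lt_one hk
    have hss : Real.sqrt k * Real.sqrt k = (k:ℝ) := Real.mul_self_sqrt hkpos.le
    have hinv : ((k:ℝ))⁻¹ = (Real.sqrt k)⁻¹ * (Real.sqrt k)⁻¹ := by rw [← mul_inv, hss]
    rw [hinv]
    ring
  have t2 : Tendsto (fun k : ℕ => ((k:ℝ))⁻¹ * (∑ i ∈ Finset.range k, ‖e i‖)^2)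
      atTop (𝓝 0) := by
    have hm := herr.mul herr
    rw [mul_zero] at hm
    refine hm.congr' ?_
    filter_upwards [eventually_ge_atTop 1] with k hk
    have hkpos : (0:ℝ) < (k:ℝ) := by exact_mod_cast Nat.lt_of_lt_of_le Nat.zero_lt_one hk
    have hss : Real.sqrt k * Real.sqrt k = (k:ℝ) := Real.mul_self_sqrt hkpos.le
    have hinv : ((k:ℝ))⁻¹ = (Real.sqrt k)⁻¹ * (Real.sqrt k)⁻¹ := by rw [← mul_inv, hss]
    rw [hinv]
    ring
  -- upper envelope tendsto
  have hW : Tendsto (fun k : ℕ => ((g xs).toReal + h xs)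
      + (‖x 0 - xs‖ * (((k:ℝ))⁻¹ * ∑ i ∈ Finset.range k, ‖e i‖)
        + 2 / L * (((k:ℝ))⁻¹ * (∑ i ∈ Finset.range k, ‖e i‖)^2)
        + (L / 2 * ‖x 0 - xs‖^2) * ((k:ℝ))⁻¹)) atTop (𝓝 ((g xs).toReal + h xs)) := by
    have hz := ((t1.const_mul (‖x 0 - xs‖)).add (t2.const_mul (2/L))).add
      (t3.const_mul (L/2 * ‖x 0 - xs‖^2))
    simpa using (tendsto_const_nhds (x := (g xs).toReal + h xs) (f := atTop)).add hz
  -- eventual upper bound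
  have hVW : ∀ k : ℕ, 1 ≤ k →
      (g ((k:ℝ)⁻¹ • ∑ j ∈ Finset.Icc 1 k, x j)).toReal
        + h ((k:ℝ)⁻¹ • ∑ j ∈ Finset.Icc 1 k, x j)
      ≤ ((g xs).toReal + h xs)
        + (‖x 0 - xs‖ * (((k:ℝ))⁻¹ * ∑ i ∈ Finset.range k, ‖e i‖)
          + 2 / L * (((k:ℝ))⁻¹ * (∑ i ∈ Finset.range k, ‖e i‖)^2)
          + (L / 2 * ‖x 0 - xs‖^2) * ((k:ℝ))⁻¹) := by
    intro k hk
    have h1 := hVup k hk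
    have hkinv : (0:ℝ) ≤ ((k:ℝ))⁻¹ := by positivity
    have h2 := mul_le_mul_of_nonneg_left (hsumb k) hkinv
    have heq : L * (‖x 0 - xs‖ * (((k:ℝ))⁻¹ * ∑ i ∈ Finset.range k, ‖e i‖)
          + 2 / L * (((k:ℝ))⁻¹ * (∑ i ∈ Finset.range k, ‖e i‖)^2)
          + (L / 2 * ‖x 0 - xs‖^2) * ((k:ℝ))⁻¹)
        = ((k:ℝ))⁻¹ * ((∑ m ∈ Finset.range k, ‖e m‖) *
              (L * ‖x 0 - xs‖ + 2 * ∑ m ∈ Finset.range k, ‖e m‖)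
            + L^2/2 * ‖x 0 - xs‖^2) := by
      field_simp
    have h3 : L * ((k:ℝ)⁻¹ * ∑ j ∈ Finset.range k,
          ((g (x (j+1))).toReal + h (x (j+1)) - ((g xs).toReal + h xs)))
        ≤ L * (‖x 0 - xs‖ * (((k:ℝ))⁻¹ * ∑ i ∈ Finset.range k, ‖e i‖)
          + 2 / L * (((k:ℝ))⁻¹ * (∑ i ∈ Finset.range k, ‖e i‖)^2)
          + (L / 2 * ‖x 0 - xs‖^2) * ((k:ℝ))⁻¹) := by
      rw [heq]
      nlinarith [h2]
    have h4 := le_of_mul_le_mul_left h3 hL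
    linarith
  -- squeeze
  have hVt : Tendsto (fun k : ℕ =>
      (g ((k:ℝ)⁻¹ • ∑ j ∈ Finset.Icc 1 k, x j)).toReal
        + h ((k:ℝ)⁻¹ • ∑ j ∈ Finset.Icc 1 k, x j)) atTop (𝓝 ((g xs).toReal + h xs)) := by
    apply tendsto_of_tendsto_of_tendsto_of_le_of_le' tendsto_const_nhds hW
    · filter_upwards [eventually_ge_atTop 1] with k hk
      exact hmin' _ (hgbar_ne_top k hk)
    · filter_upwards [eventually_ge_atTop 1] with k hk
      exact hVW k hk
  -- conclude in EReal
  have hgoal : g xs + ((h xs : ℝ) : EReal) = (((g xs).toReal + h xs : ℝ) : EReal) := by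
    rw [EReal.coe_add]
    congr 1
    exact (EReal.coe_toReal hxs_ne_top (hgbot xs)).symm
  rw [hgoal]
  have hcoe := (EReal.tendsto_coe (α := ℕ)).2 hVt
  refine Tendsto.congr' ?_ hcoe
  filter_upwards [eventually_ge_atTop 1] with k hk
  rw [EReal.coe_add]
  congr 1
  exact EReal.coe_toReal (hgbar_ne_top k hk) (hgbot _)
end
end

section
/- (Linear convergence of SGD in the interpolation / noise-free regime) Let H be a real Hilbert space and h_1, …, h_n : H → ℝ convex, each L_max-smooth, and set h = ∑_{i=1}^n h_i. Assume h is μ-strongly convex with minimiser x*, and that the interpolation condition holds: ∇h_i(x*) = 0 for every i = 1, …, n. Let (Ω, 𝓕, P) be a probability space and (i_k)_{k≥0} independent random indices, each uniformly distributed on {1, …, n}. Fix a constant step size 0 < τ ≤ 1/(2 n L_max) and define SGD iterates x_0 ∈ H (deterministic), x_{k+1} = x_k − τ · n ∇h_{i_k}(x_k). Then for every k ≥ 0, E[‖x_k − x*‖²] ≤ (1 − τμ)^k ‖x_0 − x*‖²; in particular SGD with constant step size converges linearly. -/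
noncomputable section
open MeasureTheory ProbabilityTheory

section SGDAux

variable {H : Type*} [NormedAddCommGroup H] [InnerProductSpace ℝ H] [CompleteSpace H]

lemma sgd_path_hasDerivAt {f : H → ℝ} (hdiff : Differentiable ℝ f) (x v : H) (t : ℝ) :
    HasDerivAt (fun s : ℝ => f (x + s • v)) (inner ℝ (gradient f (x + t • v)) v : ℝ) t := by
  have hp : HasDerivAt (fun s : ℝ => x + s • v) v t := by
    simpa using (hasDerivAt_id t).smul_const v |>.const_add x
  have hf : HasFDerivAt f (InnerProductSpace.toDual ℝ H (gradient f (x + t • v))) (x + t • v) :=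
    (hdiff (x + t • v)).hasGradientAt.hasFDerivAt
  have := hf.comp_hasDerivAt t hp
  simp only [InnerProductSpace.toDual_apply_apply] at this
  exact this

/-- Gradient inequality for convex differentiable functions. -/
lemma sgd_convex_grad_ineq {f : H → ℝ} (hconv : ConvexOn ℝ Set.univ f)
    (hdiff : Differentiable ℝ f) (x y : H) :
    f x + inner ℝ (gradient f x) (y - x) ≤ f y := by
  set ψ : ℝ → ℝ := fun t => f (x + t • (y - x)) with hψ
  have hψconv : ConvexOn ℝ Set.univ ψ := by
    have := hconv.comp_affineMap (AffineMap.lineMap x y : ℝ →ᵃ[ℝ] H)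
    simpa [Function.comp_def, AffineMap.lineMap_apply, ψ, add_comm] using this
  have hd : HasDerivAt ψ (inner ℝ (gradient f x) (y - x) : ℝ) 0 := by
    simpa using sgd_path_hasDerivAt hdiff x (y - x) 0
  have h01 : (0:ℝ) < 1 := one_pos
  have := hψconv.le_slope_of_hasDerivAt (Set.mem_univ 0) (Set.mem_univ 1) h01 hd
  rw [slope_def_field] at this
  have hψ0 : ψ 0 = f x := by simp [ψ]
  have hψ1 : ψ 1 = f y := by simp [ψ]
  have h2 : inner ℝ (gradient f x) (y - x) ≤ ψ 1 - ψ 0 := by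
    simpa [div_one] using this
  rw [hψ0, hψ1] at h2
  linarith

/-- Descent lemma (quadratic upper bound) for functions with Lipschitz gradient. -/
lemma sgd_descent_lemma {f : H → ℝ} {L : ℝ} (hdiff : Differentiable ℝ f)
    (hlip : ∀ a b : H, ‖gradient f a - gradient f b‖ ≤ L * ‖a - b‖) (x y : H) :
    f y ≤ f x + inner ℝ (gradient f x) (y - x) + L / 2 * ‖y - x‖ ^ 2 := by
  set v := y - x with hv
  set g : ℝ → ℝ := fun t =>
    f x + t * inner ℝ (gradient f x) v + L * t ^ 2 / 2 * ‖v‖ ^ 2 - f (x + t • v) with hg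
  have hderiv : ∀ t : ℝ, HasDerivAt g
      (inner ℝ (gradient f x) v + L * t * ‖v‖ ^ 2 - inner ℝ (gradient f (x + t • v)) v) t := by
    intro t
    have h1 : HasDerivAt (fun t : ℝ => f x + t * inner ℝ (gradient f x) v
        + L * t ^ 2 / 2 * ‖v‖ ^ 2) (inner ℝ (gradient f x) v + L * t * ‖v‖ ^ 2) t := by
      have ha : HasDerivAt (fun t : ℝ => t * (inner ℝ (gradient f x) v : ℝ))
          (inner ℝ (gradient f x) v : ℝ) t := by
        simpa using (hasDerivAt_id t).mul_const (inner ℝ (gradient f x) v : ℝ)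
      have hb : HasDerivAt (fun t : ℝ => L * t ^ 2 / 2 * ‖v‖ ^ 2)
          (L * t * ‖v‖ ^ 2) t := by
        have : HasDerivAt (fun t : ℝ => t ^ 2) (2 * t) t := by
          simpa using hasDerivAt_pow 2 t
        have := ((this.const_mul L).div_const 2).mul_const (‖v‖ ^ 2)
        exact this.congr_deriv (by ring)
      exact (ha.const_add (f x)).add hb
    exact h1.sub (sgd_path_hasDerivAt hdiff x v t)
  have hmono : MonotoneOn g (Set.Icc (0:ℝ) 1) := by
    apply monotoneOn_of_deriv_nonneg (convex_Icc 0 1)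
    · exact (fun t _ => (hderiv t).differentiableAt.continuousAt.continuousWithinAt)
    · exact fun t _ => (hderiv t).differentiableAt.differentiableWithinAt
    · intro t ht
      rw [interior_Icc] at ht
      rw [(hderiv t).deriv]
      have hcs : inner ℝ (gradient f (x + t • v)) v - inner ℝ (gradient f x) v
          ≤ L * t * ‖v‖ ^ 2 := by
        have h1 : (inner ℝ (gradient f (x + t • v)) v : ℝ) - inner ℝ (gradient f x) v
            = inner ℝ (gradient f (x + t • v) - gradient f x) v := by
          rw [inner_sub_left]
        rw [h1]
        calc (inner ℝ (gradient f (x + t • v) - gradient f x) v : ℝ)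
            ≤ ‖gradient f (x + t • v) - gradient f x‖ * ‖v‖ := real_inner_le_norm _ _
          _ ≤ L * ‖(x + t • v) - x‖ * ‖v‖ := by
              have := hlip (x + t • v) x
              exact mul_le_mul_of_nonneg_right this (norm_nonneg v)
          _ = L * t * ‖v‖ ^ 2 := by
              rw [add_sub_cancel_left, norm_smul, Real.norm_eq_abs, abs_of_pos ht.1]
              ring
      linarith
  have h01 := hmono (Set.left_mem_Icc.2 zero_le_one) (Set.right_mem_Icc.2 zero_le_one) zero_le_one
  have hg0 : g 0 = 0 := by simp [hg]
  have hg1 : g 1 = f x + inner ℝ (gradient f x) v + L / 2 * ‖v‖ ^ 2 - f (x + v) := by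
    simp [hg]
    try ring
  have hxy : x + v = y := by rw [hv]; abel
  rw [hg0, hg1, hxy] at h01
  linarith

/-- Strong convexity inequality for `h = ∑ f i`. -/
lemma sgd_strong_monotone {n : ℕ} {f : Fin n → H → ℝ} {μ : ℝ}
    (hdiff : ∀ i, Differentiable ℝ (f i))
    (hstrconv : ConvexOn ℝ Set.univ (fun x : H => (∑ i, f i x) - μ / 2 * ‖x‖ ^ 2))
    {xs : H} (hinterp : ∀ i, gradient (f i) xs = 0) (y : H) :
    μ * ‖y - xs‖ ^ 2 ≤ ∑ i, (inner ℝ (gradient (f i) y) (y - xs) : ℝ) := by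
  set v := y - xs with hv
  set F : H → ℝ := fun x => (∑ i, f i x) - μ / 2 * ‖x‖ ^ 2 with hF
  set ψ : ℝ → ℝ := fun t => F (xs + t • v) with hψ
  have hψconv : ConvexOn ℝ Set.univ ψ := by
    have := hstrconv.comp_affineMap (AffineMap.lineMap xs y : ℝ →ᵃ[ℝ] H)
    simpa [Function.comp_def, AffineMap.lineMap_apply, ψ, hv, add_comm] using this
  have hder : ∀ t : ℝ, HasDerivAt ψ
      ((∑ i, (inner ℝ (gradient (f i) (xs + t • v)) v : ℝ))
        - μ / 2 * (2 * inner ℝ xs v + 2 * t * ‖v‖ ^ 2)) t := by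
    intro t
    have h1 : HasDerivAt (fun s : ℝ => ∑ i, f i (xs + s • v))
        (∑ i, (inner ℝ (gradient (f i) (xs + t • v)) v : ℝ)) t := by
      exact HasDerivAt.fun_sum (fun i _ => sgd_path_hasDerivAt (hdiff i) xs v t)
    have heq : (fun s : ℝ => μ / 2 * ‖xs + s • v‖ ^ 2)
        = fun s : ℝ => μ / 2 * (‖xs‖ ^ 2 + 2 * (s * inner ℝ xs v) + s ^ 2 * ‖v‖ ^ 2) := by
      funext s
      rw [@norm_add_sq_real, real_inner_smul_right, norm_smul, mul_pow, Real.norm_eq_abs, sq_abs]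
    have h2 : HasDerivAt (fun s : ℝ => μ / 2 * ‖xs + s • v‖ ^ 2)
        (μ / 2 * (2 * inner ℝ xs v + 2 * t * ‖v‖ ^ 2)) t := by
      rw [heq]
      have ha : HasDerivAt (fun s : ℝ => ‖xs‖ ^ 2 + 2 * (s * inner ℝ xs v) + s ^ 2 * ‖v‖ ^ 2)
          (2 * inner ℝ xs v + 2 * t * ‖v‖ ^ 2) t := by
        have hb : HasDerivAt (fun s : ℝ => s * (inner ℝ xs v : ℝ)) (inner ℝ xs v : ℝ) t := by
          simpa using (hasDerivAt_id t).mul_const (inner ℝ xs v : ℝ)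
        have hc : HasDerivAt (fun s : ℝ => s ^ 2) (2 * t) t := by
          simpa using hasDerivAt_pow 2 t
        have := ((hb.const_mul 2).const_add (‖xs‖ ^ 2)).add (hc.mul_const (‖v‖ ^ 2))
        exact this
      exact ha.const_mul (μ / 2)
    exact h1.sub h2
  have h01 : (0:ℝ) < 1 := one_pos
  have hle := hψconv.le_slope_of_hasDerivAt (Set.mem_univ 0) (Set.mem_univ 1) h01 (hder 0)
  have hge := hψconv.slope_le_of_hasDerivAt (Set.mem_univ 0) (Set.mem_univ 1) h01 (hder 1)
  have hmono := hle.trans hge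
  rw [show xs + (1:ℝ) • v = y by rw [hv, one_smul]; abel] at hmono
  have h0' : xs + (0:ℝ) • v = xs := by simp
  rw [h0'] at hmono
  simp only [hinterp, inner_zero_left, Finset.sum_const_zero] at hmono
  linarith [hmono]

/-- Cocoercivity-type bound at the common minimiser. -/
lemma sgd_cocoercive {f : H → ℝ} {L : ℝ} (hL : 0 < L)
    (hconv : ConvexOn ℝ Set.univ f) (hdiff : Differentiable ℝ f)
    (hlip : ∀ a b : H, ‖gradient f a - gradient f b‖ ≤ L * ‖a - b‖)
    {xs : H} (hxs : gradient f xs = 0) (y : H) :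
    ‖gradient f y‖ ^ 2 ≤ 2 * L * inner ℝ (gradient f y) (y - xs) := by
  have descent := sgd_descent_lemma hdiff hlip
  have gradineq := sgd_convex_grad_ineq hconv hdiff
  set g := gradient f y with hg
  have h1 : f (y - (1 / L) • g) ≤ f y - 1 / (2 * L) * ‖g‖ ^ 2 := by
    have := descent y (y - (1 / L) • g)
    have he : (y - (1 / L) • g) - y = -((1 / L) • g) := by abel
    rw [he] at this
    have hinner : (inner ℝ g (-((1 / L) • g)) : ℝ) = -(1 / L) * ‖g‖ ^ 2 := by
      rw [inner_neg_right, real_inner_smul_right, real_inner_self_eq_norm_sq]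
      ring
    have hnorm : ‖-((1 / L) • g)‖ ^ 2 = (1 / L) ^ 2 * ‖g‖ ^ 2 := by
      rw [norm_neg, norm_smul, mul_pow, Real.norm_eq_abs, sq_abs]
    rw [hinner, hnorm] at this
    have h2 : f (y - (1 / L) • g) ≤ f y + (-(1 / L) + L / 2 * (1 / L) ^ 2) * ‖g‖ ^ 2 := by
      rw [add_mul]; linarith [this]
    have harith : (-(1 / L) + L / 2 * (1 / L) ^ 2) = -(1 / (2 * L)) := by
      field_simp; ring
    rw [harith] at h2; linarith
  have h2 : f xs ≤ f (y - (1 / L) • g) := by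
    have := gradineq xs (y - (1 / L) • g)
    simpa [hxs] using this
  have h3 : f y + inner ℝ g (xs - y) ≤ f xs := gradineq y xs
  have h4 : (inner ℝ g (xs - y) : ℝ) = - inner ℝ g (y - xs) := by
    rw [← inner_neg_right]; congr 1; abel
  rw [h4] at h3
  have hcomb : 1 / (2 * L) * ‖g‖ ^ 2 ≤ inner ℝ g (y - xs) := by linarith
  have hL' : (0:ℝ) < 2 * L := by linarith
  calc ‖g‖ ^ 2 = 2 * L * (1 / (2 * L) * ‖g‖ ^ 2) := by field_simp
    _ ≤ 2 * L * inner ℝ g (y - xs) := mul_le_mul_of_nonneg_left hcomb (le_of_lt hL')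

/-- Key one-step inequality summed over the random index. -/
lemma sgd_key_sum {n : ℕ} {f : Fin n → H → ℝ} {Lmax μ τ : ℝ} {xs : H}
    (hcoco : ∀ j (y : H), ‖gradient (f j) y‖ ^ 2
      ≤ 2 * Lmax * inner ℝ (gradient (f j) y) (y - xs))
    (hstrong : ∀ y : H, μ * ‖y - xs‖ ^ 2 ≤ ∑ i, (inner ℝ (gradient (f i) y) (y - xs) : ℝ))
    (hμ : 0 < μ) (hτ0 : 0 < τ) (hτL : τ * (n * Lmax) ≤ 1 / 2) (y : H) :
    ∑ j, ‖(y - τ • ((n : ℝ) • gradient (f j) y)) - xs‖ ^ 2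
      ≤ n * ((1 - τ * μ) * ‖y - xs‖ ^ 2) := by
  set v := y - xs with hv
  set c := τ * (n : ℝ) with hc
  set D := ∑ i, (inner ℝ (gradient (f i) y) (y - xs) : ℝ) with hD
  have hterm : ∀ j, ‖(y - τ • ((n : ℝ) • gradient (f j) y)) - xs‖ ^ 2
      = ‖v‖ ^ 2 - 2 * c * inner ℝ (gradient (f j) y) v + c ^ 2 * ‖gradient (f j) y‖ ^ 2 := by
    intro j
    have h1 : (y - τ • ((n : ℝ) • gradient (f j) y)) - xs = v - c • gradient (f j) y := by
      rw [smul_smul, hv, hc]; abel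
    rw [h1, @norm_sub_sq_real, real_inner_smul_right, norm_smul, mul_pow, Real.norm_eq_abs,
      sq_abs, real_inner_comm]
    ring
  rw [Finset.sum_congr rfl (fun j _ => hterm j)]
  rw [Finset.sum_add_distrib, Finset.sum_sub_distrib, Finset.sum_const, ← Finset.mul_sum,
    ← Finset.mul_sum]
  simp only [Finset.card_univ, Fintype.card_fin, nsmul_eq_mul]
  have hS : ∑ j, ‖gradient (f j) y‖ ^ 2 ≤ 2 * Lmax * D := by
    rw [hD, Finset.mul_sum]
    exact Finset.sum_le_sum fun j _ => hcoco j y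
  have hDv : μ * ‖v‖ ^ 2 ≤ D := hstrong y
  have hD0 : 0 ≤ D := le_trans (by positivity) hDv
  have hc0 : 0 ≤ c := by positivity
  have hcL : c * Lmax ≤ 1 / 2 := by rw [hc]; linarith [hτL]
  have hsum_inner : (∑ j, (inner ℝ (gradient (f j) y) v : ℝ)) = D := by rw [hD, hv]
  rw [hsum_inner]
  have hkey : c ^ 2 * (∑ j, ‖gradient (f j) y‖ ^ 2) ≤ c * D := by
    calc c ^ 2 * (∑ j, ‖gradient (f j) y‖ ^ 2) ≤ c ^ 2 * (2 * Lmax * D) :=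
          mul_le_mul_of_nonneg_left hS (by positivity)
      _ = 2 * (c * Lmax) * (c * D) := by ring
      _ ≤ 2 * (1 / 2) * (c * D) :=
          mul_le_mul_of_nonneg_right (by linarith) (by positivity)
      _ = c * D := by ring
  nlinarith [mul_le_mul_of_nonneg_left hDv hc0]

end SGDAux

/-- Linear convergence of SGD in the interpolation (noise-free) regime: for a finite sum
`h = ∑ i, h_i` of convex `L_max`-smooth functions that is `μ`-strongly convex with minimiser
`x*` satisfying `∇h_i(x*) = 0` for all `i`, i.i.d. uniform indices `i_k`, constant step
`0 < τ ≤ 1/(2nL_max)`, and iterates `x_{k+1} = x_k − τ·n∇h_{i_k}(x_k)`, one has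
`E[‖x_k − x*‖²] ≤ (1 − τμ)^k ‖x0 − x*‖²` for every `k`. -/
theorem sgd_linear_convergence_interpolation
    {H : Type*} [NormedAddCommGroup H] [InnerProductSpace ℝ H] [CompleteSpace H]
    {Ω : Type*} [MeasurableSpace Ω] (P : Measure Ω) [IsProbabilityMeasure P]
    (n : ℕ) (hn : 0 < n) (f : Fin n → H → ℝ) (Lmax : ℝ) (hLmax : 0 < Lmax)
    (hconv : ∀ i, ConvexOn ℝ Set.univ (f i))
    (hdiff : ∀ i, Differentiable ℝ (f i))
    (hlip : ∀ i, ∀ x y : H, ‖gradient (f i) x - gradient (f i) y‖ ≤ Lmax * ‖x - y‖)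
    (μ : ℝ) (hμ : 0 < μ)
    (hstrconv : ConvexOn ℝ Set.univ (fun x : H => (∑ i, f i x) - μ / 2 * ‖x‖ ^ 2))
    (xs : H) (hmin : ∀ y : H, ∑ i, f i xs ≤ ∑ i, f i y)
    (hinterp : ∀ i, gradient (f i) xs = 0)
    (idx : ℕ → Ω → Fin n) (hmeas : ∀ k, Measurable (idx k))
    (hunif : ∀ k (j : Fin n), P {ω | idx k ω = j} = (n : ENNReal)⁻¹)
    (hindep : iIndepFun idx P)
    (τ : ℝ) (hτ0 : 0 < τ) (hτ : τ ≤ 1 / (2 * n * Lmax))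
    (x0 : H) (x : ℕ → Ω → H) (hx0 : ∀ ω, x 0 ω = x0)
    (hrec : ∀ k ω, x (k + 1) ω = x k ω - τ • ((n : ℝ) • gradient (f (idx k ω)) (x k ω))) :
    ∀ k : ℕ,
      ∫⁻ ω, ENNReal.ofReal (‖x k ω - xs‖ ^ 2) ∂P ≤
        ENNReal.ofReal ((1 - τ * μ) ^ k * ‖x0 - xs‖ ^ 2) := by
  -- basic facts
  have hn' : (0:ℝ) < n := by exact_mod_cast hn
  have h2nL : (0:ℝ) < 2 * n * Lmax := by positivity
  have hτL : τ * (n * Lmax) ≤ 1 / 2 := by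
    have := (le_div_iff₀ h2nL).mp hτ
    nlinarith [this]
  -- strong monotonicity and cocoercivity
  have hstrong : ∀ y : H, μ * ‖y - xs‖ ^ 2 ≤ ∑ i, (inner ℝ (gradient (f i) y) (y - xs) : ℝ) :=
    sgd_strong_monotone hdiff hstrconv hinterp
  have hcoco : ∀ j (y : H), ‖gradient (f j) y‖ ^ 2
      ≤ 2 * Lmax * inner ℝ (gradient (f j) y) (y - xs) :=
    fun j y => sgd_cocoercive hLmax (hconv j) (hdiff j) (hlip j) (hinterp j) y
  -- case: trivial space
  by_cases hHtriv : ∀ y : H, y = xs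
  · intro k
    have hzero : ∀ ω, x k ω - xs = 0 := fun ω => by rw [hHtriv (x k ω)]; simp
    have : ∀ ω, ENNReal.ofReal (‖x k ω - xs‖ ^ 2) = 0 := fun ω => by
      rw [hzero ω]; simp
    rw [lintegral_congr this]
    simp
  -- nontrivial: 1 - τμ ≥ 0
  push_neg at hHtriv
  obtain ⟨y₀, hy₀⟩ := hHtriv
  have hμnL : μ ≤ n * Lmax := by
    have h1 := hstrong y₀
    have h2 : (∑ i, (inner ℝ (gradient (f i) y₀) (y₀ - xs) : ℝ)) ≤ n * Lmax * ‖y₀ - xs‖ ^ 2 := by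
      have hbound : ∀ i : Fin n, (inner ℝ (gradient (f i) y₀) (y₀ - xs) : ℝ)
          ≤ Lmax * ‖y₀ - xs‖ ^ 2 := by
        intro i
        calc (inner ℝ (gradient (f i) y₀) (y₀ - xs) : ℝ)
            ≤ ‖gradient (f i) y₀‖ * ‖y₀ - xs‖ := real_inner_le_norm _ _
          _ ≤ (Lmax * ‖y₀ - xs‖) * ‖y₀ - xs‖ := by
              have := hlip i y₀ xs
              rw [hinterp i, sub_zero] at this
              exact mul_le_mul_of_nonneg_right this (norm_nonneg _)
          _ = Lmax * ‖y₀ - xs‖ ^ 2 := by ring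
      calc (∑ i, (inner ℝ (gradient (f i) y₀) (y₀ - xs) : ℝ))
          ≤ ∑ _i : Fin n, Lmax * ‖y₀ - xs‖ ^ 2 := Finset.sum_le_sum fun i _ => hbound i
        _ = n * Lmax * ‖y₀ - xs‖ ^ 2 := by
            rw [Finset.sum_const, Finset.card_univ, Fintype.card_fin, nsmul_eq_mul]; ring
    have hv0 : (0:ℝ) < ‖y₀ - xs‖ ^ 2 :=
      pow_pos (norm_pos_iff.mpr (sub_ne_zero.mpr hy₀)) 2
    nlinarith
  have hτμ : 0 ≤ 1 - τ * μ := by nlinarith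
  -- step map
  set T : Fin n → H → H := fun j y => y - τ • ((n : ℝ) • gradient (f j) y) with hT
  set G : Fin n → H → ENNReal := fun j y => ENNReal.ofReal (‖T j y - xs‖ ^ 2) with hG
  -- representation of x k as a function of the first k indices
  have hrep : ∀ k : ℕ, ∃ Φ : (Fin k → Fin n) → H,
      ∀ ω, x k ω = Φ (fun i : Fin k => idx i.val ω) := by
    intro k
    induction k with
    | zero => exact ⟨fun _ => x0, fun ω => hx0 ω⟩
    | succ k ih =>
      obtain ⟨Φ, hΦ⟩ := ih
      refine ⟨fun v => T (v (Fin.last k)) (Φ (fun i => v i.castSucc)), fun ω => ?_⟩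
      rw [hrec k ω, hΦ ω]
      rfl
  -- measurability of compositions with x k
  have hcompmeas : ∀ (k : ℕ) (g : H → ENNReal), Measurable (fun ω => g (x k ω)) := by
    intro k g
    obtain ⟨Φ, hΦ⟩ := hrep k
    have heq : (fun ω => g (x k ω)) = (g ∘ Φ) ∘ (fun ω (i : Fin k) => idx i.val ω) := by
      funext ω; simp [hΦ ω]
    rw [heq]
    exact (measurable_of_countable (g ∘ Φ)).comp (measurable_pi_lambda _ fun i => hmeas i.val)
  -- independence of functions of idx k and functions of x k
  have hindep' : ∀ (k : ℕ) (φ : Fin n → ENNReal) (g : H → ENNReal),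
      IndepFun (fun ω => φ (idx k ω)) (fun ω => g (x k ω)) P := by
    intro k φ g
    obtain ⟨Φ, hΦ⟩ := hrep k
    have hdisj : Disjoint ({k} : Finset ℕ) (Finset.range k) := by
      simp [Finset.disjoint_singleton_left]
    have hbase := hindep.indepFun_finset ({k} : Finset ℕ) (Finset.range k) hdisj hmeas
    set Ψ : ({i // i ∈ Finset.range k} → Fin n) → ENNReal :=
      fun v => g (Φ (fun i : Fin k => v ⟨i.val, Finset.mem_range.mpr i.isLt⟩)) with hΨ
    set χ : ({i // i ∈ ({k} : Finset ℕ)} → Fin n) → ENNReal :=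
      fun v => φ (v ⟨k, Finset.mem_singleton_self k⟩) with hχ
    have hres := hbase.comp (measurable_of_countable χ) (measurable_of_countable Ψ)
    have heq1 : χ ∘ (fun a (i : {i // i ∈ ({k} : Finset ℕ)}) => idx i.val a)
        = fun ω => φ (idx k ω) := rfl
    have heq2 : Ψ ∘ (fun a (i : {i // i ∈ Finset.range k}) => idx i.val a)
        = fun ω => g (x k ω) := by
      funext ω
      simp only [Function.comp_apply, hΨ]
      rw [hΦ ω]
    rwa [heq1, heq2] at hres
  -- the one-step contraction in expectation
  have hstep : ∀ k : ℕ,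
      ∫⁻ ω, ENNReal.ofReal (‖x (k+1) ω - xs‖ ^ 2) ∂P
        ≤ ENNReal.ofReal (1 - τ * μ) * ∫⁻ ω, ENNReal.ofReal (‖x k ω - xs‖ ^ 2) ∂P := by
    intro k
    set φ : Fin n → Fin n → ENNReal := fun j i => if i = j then 1 else 0 with hφ
    have hptwise : ∀ ω, ENNReal.ofReal (‖x (k+1) ω - xs‖ ^ 2)
        = ∑ j, φ j (idx k ω) * G j (x k ω) := by
      intro ω
      rw [Finset.sum_eq_single (idx k ω)]
      · rw [hrec k ω]
        simp [hφ, hG, hT]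
      · intro j _ hj
        simp [hφ, Ne.symm hj]
      · intro h; exact absurd (Finset.mem_univ _) h
    have hmeasj : ∀ j : Fin n, Measurable (fun ω => φ j (idx k ω) * G j (x k ω)) :=
      fun j => ((measurable_of_countable (φ j)).comp (hmeas k)).mul (hcompmeas k (G j))
    have hFmeas : Measurable (fun ω => ENNReal.ofReal (‖x k ω - xs‖ ^ 2)) :=
      hcompmeas k (fun y => ENNReal.ofReal (‖y - xs‖ ^ 2))
    have hn0 : (n : ENNReal) ≠ 0 := Nat.cast_ne_zero.mpr hn.ne'
    calc ∫⁻ ω, ENNReal.ofReal (‖x (k+1) ω - xs‖ ^ 2) ∂P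
        = ∫⁻ ω, ∑ j, φ j (idx k ω) * G j (x k ω) ∂P := lintegral_congr hptwise
      _ = ∑ j, ∫⁻ ω, φ j (idx k ω) * G j (x k ω) ∂P :=
          lintegral_finset_sum _ fun j _ => hmeasj j
      _ = ∑ j, (∫⁻ ω, φ j (idx k ω) ∂P) * ∫⁻ ω, G j (x k ω) ∂P := by
          refine Finset.sum_congr rfl fun j _ => ?_
          exact lintegral_mul_eq_lintegral_mul_lintegral_of_indepFun
            ((measurable_of_countable (φ j)).comp (hmeas k))
            (hcompmeas k (G j)) (hindep' k (φ j) (G j))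
      _ = ∑ j, (n : ENNReal)⁻¹ * ∫⁻ ω, G j (x k ω) ∂P := by
          refine Finset.sum_congr rfl fun j _ => ?_
          congr 1
          calc ∫⁻ ω, φ j (idx k ω) ∂P
              = ∫⁻ ω, Set.indicator {ω | idx k ω = j} (1 : Ω → ENNReal) ω ∂P :=
                lintegral_congr fun ω => by
                  by_cases h : idx k ω = j <;> simp [hφ, h, Set.indicator_apply]
            _ = P {ω | idx k ω = j} :=
                lintegral_indicator_one (hmeas k (measurableSet_singleton j))
            _ = (n : ENNReal)⁻¹ := hunif k j
      _ = (n : ENNReal)⁻¹ * ∑ j, ∫⁻ ω, G j (x k ω) ∂P := by rw [Finset.mul_sum]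
      _ = (n : ENNReal)⁻¹ * ∫⁻ ω, ∑ j, G j (x k ω) ∂P := by
          rw [lintegral_finset_sum _ fun j _ => hcompmeas k (G j)]
      _ ≤ (n : ENNReal)⁻¹ * ∫⁻ ω, ENNReal.ofReal ((n : ℝ) * ((1 - τ * μ) * ‖x k ω - xs‖ ^ 2)) ∂P := by
          refine mul_le_mul_right (lintegral_mono fun ω => ?_) _
          have hsum : (∑ j, G j (x k ω))
              = ENNReal.ofReal (∑ j, ‖T j (x k ω) - xs‖ ^ 2) := by
            rw [ENNReal.ofReal_sum_of_nonneg (fun j _ => by positivity)]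
          rw [hsum]
          apply ENNReal.ofReal_le_ofReal
          exact sgd_key_sum hcoco hstrong hμ hτ0 hτL (x k ω)
      _ = ENNReal.ofReal (1 - τ * μ) * ∫⁻ ω, ENNReal.ofReal (‖x k ω - xs‖ ^ 2) ∂P := by
          have hrw : ∀ ω, ENNReal.ofReal ((n : ℝ) * ((1 - τ * μ) * ‖x k ω - xs‖ ^ 2))
              = (n : ENNReal) * (ENNReal.ofReal (1 - τ * μ)
                * ENNReal.ofReal (‖x k ω - xs‖ ^ 2)) := by
            intro ω
            rw [ENNReal.ofReal_mul (by positivity), ENNReal.ofReal_mul hτμ,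
              ENNReal.ofReal_natCast]
          rw [lintegral_congr hrw,
            lintegral_const_mul _ (hFmeas.const_mul (ENNReal.ofReal (1 - τ * μ))),
            lintegral_const_mul _ hFmeas, ← mul_assoc,
            ENNReal.inv_mul_cancel hn0 (ENNReal.natCast_ne_top n), one_mul]
  -- induction
  intro k
  induction k with
  | zero =>
    have hc : ∀ ω, ENNReal.ofReal (‖x 0 ω - xs‖ ^ 2) = ENNReal.ofReal (‖x0 - xs‖ ^ 2) := by
      intro ω; rw [hx0 ω]
    rw [lintegral_congr hc, lintegral_const, measure_univ, mul_one, pow_zero, one_mul]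
  | succ k ih =>
    calc ∫⁻ ω, ENNReal.ofReal (‖x (k+1) ω - xs‖ ^ 2) ∂P
        ≤ ENNReal.ofReal (1 - τ * μ) * ∫⁻ ω, ENNReal.ofReal (‖x k ω - xs‖ ^ 2) ∂P := hstep k
      _ ≤ ENNReal.ofReal (1 - τ * μ) * ENNReal.ofReal ((1 - τ * μ) ^ k * ‖x0 - xs‖ ^ 2) :=
          mul_le_mul_right ih _
      _ = ENNReal.ofReal ((1 - τ * μ) ^ (k+1) * ‖x0 - xs‖ ^ 2) := by
          rw [← ENNReal.ofReal_mul hτμ]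
          ring_nf
end
end
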